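/- arXiv:2506.14419 — 2 statements merged into one kernel-verified Lean document; each statement's English description precedes it below -/
import Mathlib

section
/- Let n ≥ 26 be an integer. For each integer a with 6 ≤ a ≤ ⌊(n+4)/5⌋ and n − a ≡ 0 (mod 2), and each integer b with 4 ≤ b ≤ a − 2, the integer (a choose 2) − b = a(a−1)/2 − b is an eigenvalue of the transposition graph Cay(S_n, T_n). -/
open Classical in
/-- The adjacency matrix of the transposition graph `Cay(S_n, T_n)`: vertices are the
permutations of `{1, ..., n}` (modelled as `Equiv.Perm (Fin n)`), and distinct `f, g`
are adjacent iff `f * g⁻¹` is a transposition. -/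
noncomputable def transpositionGraphAdjMatrix (n : ℕ) :
    Matrix (Equiv.Perm (Fin n)) (Equiv.Perm (Fin n)) ℝ :=
  fun f g => if f ≠ g ∧ (f * g⁻¹).IsSwap then 1 else 0

/-- An integer `m` is an eigenvalue of the transposition graph `Cay(S_n, T_n)` if it is an
eigenvalue of its adjacency matrix viewed as a matrix over `ℝ`. -/
def IsTranspositionGraphEigenvalue (n : ℕ) (m : ℤ) : Prop :=
  ∃ v : Equiv.Perm (Fin n) → ℝ, v ≠ 0 ∧
    (transpositionGraphAdjMatrix n).mulVec v = (m : ℝ) • v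

open Equiv Equiv.Perm Finset
open scoped Classical

namespace TG

variable {n : ℕ}

/-- row-preserving permutations -/
def pRow (row : Fin n → ℕ) (g : Perm (Fin n)) : Prop := ∀ x, row (g x) = row x

instance (row : Fin n → ℕ) (g : Perm (Fin n)) : Decidable (pRow row g) := by
  unfold pRow; infer_instance

lemma pRow.one (row : Fin n → ℕ) : pRow row 1 := fun _ => rfl

lemma pRow.mul {row : Fin n → ℕ} {g h : Perm (Fin n)} (hg : pRow row g) (hh : pRow row h) :
    pRow row (g * h) := fun x => by
  simp only [Perm.mul_apply]; rw [hg, hh]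

lemma pRow.inv {row : Fin n → ℕ} {g : Perm (Fin n)} (hg : pRow row g) : pRow row g⁻¹ :=
  fun x => by have h : g (g⁻¹ x) = x := Equiv.apply_symm_apply g x; conv_rhs => rw [← h, hg]

/-- a permutation that is row- and column-preserving is the identity -/
lemma pRow.eq_one {row col : Fin n → ℕ}
    (hinj : ∀ x y : Fin n, row x = row y → col x = col y → x = y)
    {g : Perm (Fin n)} (hr : pRow row g) (hc : pRow col g) : g = 1 := by
  refine Equiv.ext fun x => ?_
  have := hinj (g x) x (hr x) (hc x)
  simpa using this

/-- permutation fixing everything outside a pair is 1 or the swap -/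
lemma fix_out_pair {x y : Fin n} (hxy : x ≠ y) {q : Perm (Fin n)}
    (h : ∀ z, z ≠ x → z ≠ y → q z = z) : q = 1 ∨ q = Equiv.swap x y := by
  have hx : q x = x ∨ q x = y := by
    by_contra hc
    push_neg at hc
    have := h (q x) hc.1 hc.2
    exact hc.1 (q.injective this)
  rcases hx with hx | hx
  · have hy : q y = y := by
      by_contra hc
      have h1 : q y ≠ x := by
        intro hq
        have : q y = q x := by rw [hq, hx]
        exact hxy (q.injective this).symm
      have := h (q y) h1 hc
      exact hc (q.injective this)
    left
    refine Equiv.ext fun z => ?_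
    rcases eq_or_ne z x with rfl | hzx
    · simpa using hx
    rcases eq_or_ne z y with rfl | hzy
    · simpa using hy
    · simpa using h z hzx hzy
  · have hy : q y = x := by
      by_contra hc
      have h1 : q y ≠ y := fun hq => hxy (q.injective (hx.trans hq.symm))
      have := h (q y) hc h1
      exact h1 (q.injective this)
    right
    refine Equiv.ext fun z => ?_
    rcases eq_or_ne z x with rfl | hzx
    · rw [hx, Equiv.swap_apply_left]
    rcases eq_or_ne z y with rfl | hzy
    · rw [hy, Equiv.swap_apply_right]
    · rw [h z hzx hzy, Equiv.swap_apply_of_ne_of_ne hzx hzy]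

lemma pRow_swap {row : Fin n → ℕ} {x y : Fin n} (h : row x = row y) :
    pRow row (Equiv.swap x y) := by
  intro z
  rcases eq_or_ne z x with rfl | hzx
  · rw [Equiv.swap_apply_left, h]
  rcases eq_or_ne z y with rfl | hzy
  · rw [Equiv.swap_apply_right, h]
  · rw [Equiv.swap_apply_of_ne_of_ne hzx hzy]

lemma pRow_swap_iff {row : Fin n → ℕ} {x y : Fin n} :
    pRow row (Equiv.swap x y) ↔ row x = row y := by
  constructor
  · intro h
    have := h x
    rw [Equiv.swap_apply_left] at this
    exact this.symm
  · exact pRow_swap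

lemma isSwap_conj {σ τ : Perm (Fin n)} (h : τ.IsSwap) : (σ * τ * σ⁻¹).IsSwap := by
  obtain ⟨x, y, hxy, rfl⟩ := h
  exact ⟨σ x, σ y, fun hc => hxy (σ.injective hc), (Equiv.swap_apply_apply σ x y).symm⟩

variable (row col : Fin n → ℕ)

/-- the Young-symmetrizer-like vector -/
noncomputable def ee (g : Perm (Fin n)) : ℝ :=
  ∑ q ∈ univ.filter (fun q : Perm (Fin n) => pRow col q ∧ pRow row (g * q⁻¹)),
    ((Perm.sign q : ℤ) : ℝ)

variable {row col}

lemma ee_one (hinj : ∀ x y : Fin n, row x = row y → col x = col y → x = y) :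
    ee row col 1 = 1 := by
  rw [ee]
  have : univ.filter (fun q : Perm (Fin n) => pRow col q ∧ pRow row ((1 : Perm (Fin n)) * q⁻¹))
      = {1} := by
    ext q
    simp only [mem_filter, mem_univ, true_and, one_mul, mem_singleton]
    constructor
    · rintro ⟨hc, hr⟩
      have hr' : pRow row q := by simpa using pRow.inv hr
      exact pRow.eq_one hinj hr' hc
    · rintro rfl
      exact ⟨pRow.one col, by simpa using pRow.one row⟩
  rw [this, sum_singleton]
  simp

lemma ee_mul {p q₀ : Perm (Fin n)} (hp : pRow row p) (hq₀ : pRow col q₀) (g : Perm (Fin n)) :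
    ee row col (p * g * q₀) = ((Perm.sign q₀ : ℤ) : ℝ) * ee row col g := by
  rw [ee, ee, Finset.mul_sum]
  refine Finset.sum_nbij' (i := fun q => q * q₀⁻¹) (j := fun q' => q' * q₀) ?_ ?_ ?_ ?_ ?_
  · intro q hq
    simp only [mem_filter, mem_univ, true_and] at hq ⊢
    refine ⟨hq.1.mul hq₀.inv, ?_⟩
    have heq : g * (q * q₀⁻¹)⁻¹ = p⁻¹ * (p * g * q₀ * q⁻¹) := by group
    rw [heq]
    exact hp.inv.mul hq.2
  · intro q' hq'
    simp only [mem_filter, mem_univ, true_and] at hq' ⊢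
    refine ⟨hq'.1.mul hq₀, ?_⟩
    have heq : p * g * q₀ * (q' * q₀)⁻¹ = p * (g * q'⁻¹) := by group
    rw [heq]
    exact hp.mul hq'.2
  · intro q _; group
  · intro q' _; group
  · intro q _
    have hs : Perm.sign (q * q₀⁻¹) * Perm.sign q₀ = Perm.sign q := by
      rw [map_mul, map_inv, inv_mul_cancel_right]
    rw [← hs]
    push_cast
    ring

/-- set of transpositions -/
noncomputable def TT {n : ℕ} : Finset (Perm (Fin n)) := univ.filter Perm.IsSwap

lemma mem_TT {n : ℕ} {τ : Perm (Fin n)} : τ ∈ (TT : Finset (Perm (Fin n))) ↔ τ.IsSwap := by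
  rw [TT, Finset.mem_filter]
  simp

variable (row col) in
noncomputable def yy (g : Perm (Fin n)) : ℝ := ∑ τ ∈ (TT : Finset (Perm (Fin n))), ee row col (τ * g)

lemma yy_conj {p q₀ : Perm (Fin n)} (hp : pRow row p) (hq₀ : pRow col q₀) (g : Perm (Fin n)) :
    yy row col (p * g * q₀) = ((Perm.sign q₀ : ℤ) : ℝ) * yy row col g := by
  rw [yy, yy, Finset.mul_sum]
  refine Finset.sum_nbij' (i := fun τ => p⁻¹ * τ * p) (j := fun σ => p * σ * p⁻¹) ?_ ?_ ?_ ?_ ?_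
  · intro τ hτ
    rw [mem_TT] at hτ
    have hs : (p⁻¹ * τ * p).IsSwap := by
      have heq : p⁻¹ * τ * p = p⁻¹ * τ * (p⁻¹)⁻¹ := by group
      rw [heq]
      exact isSwap_conj hτ
    simpa [mem_TT] using hs
  · intro σ hσ
    rw [mem_TT] at hσ
    have hs : (p * σ * p⁻¹).IsSwap := isSwap_conj hσ
    simpa [mem_TT] using hs
  · intro τ _; group
  · intro σ _; group
  · intro τ _
    have heq : τ * (p * g * q₀) = p * ((p⁻¹ * τ * p) * g) * q₀ := by group
    rw [heq, ee_mul hp hq₀, mul_comm]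

lemma yy_bad_zero (g : Perm (Fin n)) (x y : Fin n) (hxy : x ≠ y) (hr : row x = row y)
    (hc : col (g⁻¹ x) = col (g⁻¹ y)) : yy row col g = 0 := by
  have hne : g⁻¹ x ≠ g⁻¹ y := fun h => hxy (g⁻¹.injective h)
  have hc₀ : Equiv.swap (g⁻¹ x) (g⁻¹ y) = g⁻¹ * Equiv.swap x y * g := by
    have := Equiv.swap_apply_apply g⁻¹ x y
    simpa using this
  have hgeq : (Equiv.swap x y) * g * (g⁻¹ * Equiv.swap x y * g) = g := by
    have h2 : Equiv.swap x y * Equiv.swap x y = 1 := Equiv.swap_mul_self x y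
    calc (Equiv.swap x y) * g * (g⁻¹ * Equiv.swap x y * g)
        = (Equiv.swap x y * Equiv.swap x y) * g := by group
      _ = g := by rw [h2, one_mul]
  have hpc : pRow col (g⁻¹ * Equiv.swap x y * g) := by rw [← hc₀]; exact pRow_swap hc
  have hsign : Perm.sign (g⁻¹ * Equiv.swap x y * g) = -1 := by
    rw [← hc₀]
    exact Equiv.Perm.sign_swap hne
  have h := yy_conj (pRow_swap hr) hpc g
  rw [hgeq, hsign] at h
  push_cast at h
  linarith

lemma sort_aux {n : ℕ} {row col : Fin n → ℕ}
    (hclos : ∀ (x : Fin n) (r' : ℕ), r' < row x → ∃ z : Fin n, row z = r' ∧ col z = col x) :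
    ∀ (k : ℕ) (φ : Perm (Fin n)),
      (∀ x y : Fin n, x ≠ y → row x = row y → col (φ x) = col (φ y) → False) →
      ((univ.filter (fun x : Fin n => row (φ x) ≠ row x)).card ≤ k) →
      ∃ q : Perm (Fin n), pRow col q ∧ ∀ x, row (q (φ x)) = row x := by
  intro k
  induction k with
  | zero =>
    intro φ _ hcard
    refine ⟨1, pRow.one col, fun x => ?_⟩
    have hempty : (univ.filter (fun x : Fin n => row (φ x) ≠ row x)) = ∅ :=
      Finset.card_eq_zero.mp (Nat.le_zero.mp hcard)
    have := Finset.filter_eq_empty_iff.mp hempty (Finset.mem_univ x)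
    simpa using not_ne_iff.mp this
  | succ k ih =>
    intro φ hinjc hcard
    set Bad := univ.filter (fun x : Fin n => row (φ x) ≠ row x) with hBad
    by_cases hBne : Bad.Nonempty
    · have hBimne : (Bad.image row).Nonempty := hBne.image row
      set r := (Bad.image row).min' hBimne with hr
      obtain ⟨x₀, hx₀B, hx₀r⟩ : ∃ x₀ ∈ Bad, row x₀ = r := by
        have := Finset.min'_mem (Bad.image row) hBimne
        simpa [eq_comm] using Finset.mem_image.mp this
      have hx₀bad : row (φ x₀) ≠ row x₀ := by
        have := (Finset.mem_filter.mp hx₀B).2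
        exact this
      have hc1 : ∀ x : Fin n, row x < r → row (φ x) = row x := by
        intro x hx
        by_contra hne
        have hxB : x ∈ Bad := Finset.mem_filter.mpr ⟨Finset.mem_univ x, hne⟩
        have : r ≤ row x := Finset.min'_le _ _ (Finset.mem_image_of_mem row hxB)
        omega
      have hc2 : r < row (φ x₀) := by
        rcases Nat.lt_trichotomy (row (φ x₀)) r with hlt | heq | hgt
        · exfalso
          set W := univ.filter (fun w : Fin n => row w = row (φ x₀)) with hW
          have hmaps : ∀ x ∈ W, φ x ∈ W := by
            intro x hx
            have hxw : row x = row (φ x₀) := (Finset.mem_filter.mp hx).2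
            have : row (φ x) = row x := hc1 x (by omega)
            exact Finset.mem_filter.mpr ⟨Finset.mem_univ _, by omega⟩
          have himg : W.image φ = W := by
            apply Finset.eq_of_subset_of_card_le
            · intro w hw
              obtain ⟨x, hx, rfl⟩ := Finset.mem_image.mp hw
              exact hmaps x hx
            · rw [Finset.card_image_of_injective _ φ.injective]
          have hφx₀W : φ x₀ ∈ W := Finset.mem_filter.mpr ⟨Finset.mem_univ _, rfl⟩
          rw [← himg] at hφx₀W
          obtain ⟨w, hwW, hww⟩ := Finset.mem_image.mp hφx₀W
          have hwx₀ : w = x₀ := φ.injective hww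
          subst hwx₀
          have := (Finset.mem_filter.mp hwW).2
          omega
        · exact absurd (heq.trans hx₀r.symm) hx₀bad
        · exact hgt
      obtain ⟨z, hzr, hzc⟩ := hclos (φ x₀) r hc2
      have hzne : z ≠ φ x₀ := by
        intro h
        rw [h] at hzr
        omega
      set x₁ := φ⁻¹ z with hx₁def
      have hφx₁ : φ x₁ = z := Equiv.apply_symm_apply φ z
      have hx₁ne : x₁ ≠ x₀ := by
        intro h
        rw [h] at hφx₁
        exact hzne hφx₁.symm
      have hrowx₁ : row x₁ ≠ r := by
        intro h
        exact hinjc x₀ x₁ (Ne.symm hx₁ne) (by omega) (by rw [hφx₁, hzc])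
      have hx₁B : x₁ ∈ Bad := by
        refine Finset.mem_filter.mpr ⟨Finset.mem_univ _, ?_⟩
        rw [hφx₁, hzr]
        exact fun h => hrowx₁ h.symm
      set q₀ := Equiv.swap (φ x₀) z with hq₀
      have hq₀col : pRow col q₀ := by
        rw [hq₀]
        exact pRow_swap hzc.symm
      set φ' := q₀ * φ with hφ'
      have hinjc' : ∀ x y : Fin n, x ≠ y → row x = row y →
          col (φ' x) = col (φ' y) → False := by
        intro x y hxy hrr hcc
        have hc'x : col (φ' x) = col (φ x) := hq₀col (φ x)
        have hc'y : col (φ' y) = col (φ y) := hq₀col (φ y)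
        exact hinjc x y hxy hrr (by rw [← hc'x, ← hc'y, hcc])
      have hsub : (univ.filter (fun x : Fin n => row (φ' x) ≠ row x)) ⊆ Bad.erase x₀ := by
        intro x hx
        have hxbad' : row (q₀ (φ x)) ≠ row x := (Finset.mem_filter.mp hx).2
        have hxne₀ : x ≠ x₀ := by
          intro h
          subst h
          rw [hq₀, Equiv.swap_apply_left] at hxbad'
          omega
        refine Finset.mem_erase.mpr ⟨hxne₀, ?_⟩
        rcases eq_or_ne x x₁ with rfl | hxne₁
        · exact hx₁B
        · have h1 : φ x ≠ φ x₀ := fun h => hxne₀ (φ.injective h)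
          have h2 : φ x ≠ z := fun h => hxne₁ (by rw [← hφx₁] at h; exact φ.injective h)
          rw [hq₀, Equiv.swap_apply_of_ne_of_ne h1 h2] at hxbad'
          exact Finset.mem_filter.mpr ⟨Finset.mem_univ _, hxbad'⟩
      have hcard' : (univ.filter (fun x : Fin n => row (φ' x) ≠ row x)).card ≤ k := by
        have h1 := Finset.card_le_card hsub
        have h2 : (Bad.erase x₀).card = Bad.card - 1 := Finset.card_erase_of_mem hx₀B
        have h3 : 1 ≤ Bad.card := Finset.card_pos.mpr ⟨x₀, hx₀B⟩
        omega
      obtain ⟨q', hq'c, hq'r⟩ := ih φ' hinjc' hcard'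
      refine ⟨q' * q₀, hq'c.mul hq₀col, fun x => ?_⟩
      have := hq'r x
      simpa [Perm.mul_apply, hφ'] using this
    · refine ⟨1, pRow.one col, fun x => ?_⟩
      rw [Finset.not_nonempty_iff_eq_empty] at hBne
      have := Finset.filter_eq_empty_iff.mp hBne (Finset.mem_univ x)
      simpa using not_ne_iff.mp this

/-- no bad pair implies `g` decomposes as `p * q` with `p` row-preserving, `q` col-preserving -/
lemma decomp {n : ℕ} {row col : Fin n → ℕ}
    (hclos : ∀ (x : Fin n) (r' : ℕ), r' < row x → ∃ z : Fin n, row z = r' ∧ col z = col x)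
    (g : Perm (Fin n))
    (hnb : ¬ ∃ x y : Fin n, x ≠ y ∧ row x = row y ∧ col (g⁻¹ x) = col (g⁻¹ y)) :
    ∃ p q : Perm (Fin n), pRow row p ∧ pRow col q ∧ g = p * q := by
  push_neg at hnb
  have hinjc : ∀ x y : Fin n, x ≠ y → row x = row y → col (g⁻¹ x) = col (g⁻¹ y) → False :=
    fun x y hxy hr hc => (hnb x y hxy hr) hc
  obtain ⟨q, hqc, hqr⟩ := sort_aux hclos n g⁻¹ hinjc (le_trans (Finset.card_filter_le _ _)
    (by simp))
  refine ⟨(q * g⁻¹)⁻¹, q, ?_, hqc, by group⟩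
  have hqg : pRow row (q * g⁻¹) := by
    intro x
    exact hqr x
  exact hqg.inv

lemma isSwap_inv {n : ℕ} {τ : Perm (Fin n)} (h : τ.IsSwap) : τ⁻¹ = τ := by
  obtain ⟨x, y, hxy, rfl⟩ := h
  exact Equiv.swap_inv x y

lemma swap_ne_one {n : ℕ} {x y : Fin n} (hxy : x ≠ y) : Equiv.swap x y ≠ 1 := by
  intro h
  have := congrArg (fun e : Perm (Fin n) => e x) h
  simp only [Equiv.swap_apply_left, Perm.one_apply] at this
  exact hxy this.symm

lemma swap_eq_swap_pair {n : ℕ} {u v x y : Fin n} (huv : u ≠ v)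
    (h : Equiv.swap u v = Equiv.swap x y) : (u = x ∧ v = y) ∨ (u = y ∧ v = x) := by
  have hu := congrArg (fun e : Perm (Fin n) => e u) h
  simp only [Equiv.swap_apply_left] at hu
  -- hu : v = swap x y u
  rcases eq_or_ne u x with rfl | hux
  · left
    refine ⟨rfl, ?_⟩
    rw [Equiv.swap_apply_left] at hu
    exact hu
  rcases eq_or_ne u y with rfl | huy
  · right
    refine ⟨rfl, ?_⟩
    rw [Equiv.swap_apply_right] at hu
    exact hu
  · exfalso
    rw [Equiv.swap_apply_of_ne_of_ne hux huy] at hu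
    exact huv hu.symm

variable {n : ℕ} {row col : Fin n → ℕ}

lemma ee_swap (hinj : ∀ x y : Fin n, row x = row y → col x = col y → x = y)
    {x y : Fin n} (hxy : x ≠ y) :
    ee row col (Equiv.swap x y)
      = (if row x = row y then (1 : ℝ) else 0) - (if col x = col y then (1 : ℝ) else 0) := by
  rw [ee]
  set F := univ.filter
    (fun q : Perm (Fin n) => pRow col q ∧ pRow row (Equiv.swap x y * q⁻¹)) with hF
  have hmem : ∀ q ∈ F, q = 1 ∨ q = Equiv.swap x y := by
    intro q hq
    obtain ⟨hqc, hqr⟩ := (Finset.mem_filter.mp hq).2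
    refine fix_out_pair hxy ?_
    intro z hzx hzy
    have h1 : (Equiv.swap x y * q⁻¹) (q z) = Equiv.swap x y z := by
      simp [Perm.mul_apply]
    have h2 := hqr (q z)
    rw [h1, Equiv.swap_apply_of_ne_of_ne hzx hzy] at h2
    exact hinj (q z) z h2.symm (hqc z)
  have h1mem : ((1 : Perm (Fin n)) ∈ F) ↔ row x = row y := by
    simp only [hF, Finset.mem_filter, Finset.mem_univ, true_and, inv_one, mul_one]
    constructor
    · rintro ⟨_, hr⟩
      exact pRow_swap_iff.mp hr
    · intro h
      exact ⟨pRow.one col, pRow_swap h⟩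
  have hsmem : (Equiv.swap x y ∈ F) ↔ col x = col y := by
    simp only [hF, Finset.mem_filter, Finset.mem_univ, true_and]
    constructor
    · rintro ⟨hc, _⟩
      exact pRow_swap_iff.mp hc
    · intro h
      refine ⟨pRow_swap h, ?_⟩
      have : Equiv.swap x y * (Equiv.swap x y)⁻¹ = 1 := by group
      rw [this]
      exact pRow.one row
  have hns : (1 : Perm (Fin n)) ≠ Equiv.swap x y := fun h => swap_ne_one hxy h.symm
  by_cases hrr : row x = row y <;> by_cases hcc : col x = col y
  · exact absurd (hinj x y hrr hcc) hxy
  · have hFeq : F = {1} := by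
      ext q
      simp only [Finset.mem_singleton]
      constructor
      · intro hq
        rcases hmem q hq with rfl | rfl
        · rfl
        · exact absurd (hsmem.mp hq) hcc
      · rintro rfl
        exact h1mem.mpr hrr
    rw [hFeq, Finset.sum_singleton]
    simp [hrr, hcc]
  · have hFeq : F = {Equiv.swap x y} := by
      ext q
      simp only [Finset.mem_singleton]
      constructor
      · intro hq
        rcases hmem q hq with rfl | rfl
        · exact absurd (h1mem.mp hq) hrr
        · rfl
      · rintro rfl
        exact hsmem.mpr hcc
    rw [hFeq, Finset.sum_singleton]
    rw [Equiv.Perm.sign_swap hxy]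
    simp [hrr, hcc]
  · have hFeq : F = ∅ := by
      ext q
      simp only [Finset.notMem_empty, iff_false]
      intro hq
      rcases hmem q hq with rfl | rfl
      · exact hrr (h1mem.mp hq)
      · exact hcc (hsmem.mp hq)
    rw [hFeq, Finset.sum_empty]
    simp [hrr, hcc]

lemma yy_one_eq (hinj : ∀ x y : Fin n, row x = row y → col x = col y → x = y) {M : ℕ}
    (hcount : ∑ x : Fin n, ∑ y : Fin n,
        ((if row x = row y then (1 : ℝ) else 0) - (if col x = col y then (1 : ℝ) else 0))
      = 2 * M) :
    yy row col 1 = M := by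
  classical
  set Fp : Fin n × Fin n → ℝ := fun pr =>
    (if row pr.1 = row pr.2 then (1 : ℝ) else 0) - (if col pr.1 = col pr.2 then (1 : ℝ) else 0)
    with hFp
  have hdiag : ∑ pr ∈ Finset.univ.offDiag, Fp pr = 2 * M := by
    rw [← hcount]
    rw [← Finset.sum_product']
    rw [show (Finset.univ : Finset (Fin n)).offDiag = (Finset.univ ×ˢ Finset.univ).filter (fun a : Fin n × Fin n => a.1 ≠ a.2) by ext; simp]
    rw [Finset.sum_filter]
    apply Finset.sum_congr rfl
    intro pr _
    by_cases h : pr.1 ≠ pr.2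
    · simp [h, hFp]
    · push_neg at h
      simp [h, hFp]
  have hmaps : ∀ pr ∈ (Finset.univ.offDiag : Finset (Fin n × Fin n)),
      Equiv.swap pr.1 pr.2 ∈ (TT : Finset (Perm (Fin n))) := by
    intro pr hpr
    have hne := (Finset.mem_offDiag.mp hpr).2.2
    exact mem_TT.mpr ⟨pr.1, pr.2, hne, rfl⟩
  have hfib := Finset.sum_fiberwise_of_maps_to hmaps Fp
  have hinner : ∀ τ ∈ (TT : Finset (Perm (Fin n))),
      (∑ pr ∈ Finset.univ.offDiag.filter (fun pr => Equiv.swap pr.1 pr.2 = τ), Fp pr)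
        = 2 * ee row col τ := by
    intro τ hτ
    obtain ⟨x, y, hxy, rfl⟩ := mem_TT.mp hτ
    have hfil : Finset.univ.offDiag.filter
        (fun pr : Fin n × Fin n => Equiv.swap pr.1 pr.2 = Equiv.swap x y)
        = {(x, y), (y, x)} := by
      ext pr
      simp only [Finset.mem_filter, Finset.mem_insert, Finset.mem_singleton]
      constructor
      · rintro ⟨hpr, heq⟩
        have hne := (Finset.mem_offDiag.mp hpr).2.2
        rcases swap_eq_swap_pair hne heq with ⟨h1, h2⟩ | ⟨h1, h2⟩
        · left; exact Prod.ext h1 h2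
        · right; exact Prod.ext h1 h2
      · rintro (rfl | rfl)
        · exact ⟨Finset.mem_offDiag.mpr ⟨Finset.mem_univ _, Finset.mem_univ _, hxy⟩, rfl⟩
        · exact ⟨Finset.mem_offDiag.mpr ⟨Finset.mem_univ _, Finset.mem_univ _, Ne.symm hxy⟩,
            Equiv.swap_comm _ _⟩
    rw [hfil]
    have hpairne : ((x, y) : Fin n × Fin n) ≠ (y, x) := by
      intro h
      exact hxy (congrArg Prod.fst h)
    rw [Finset.sum_pair hpairne]
    have hsymm : Fp (y, x) = Fp (x, y) := by
      simp only [hFp]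
      by_cases h1 : row x = row y <;> by_cases h2 : col x = col y <;>
        simp [h1, h2, eq_comm]
    rw [hsymm, ee_swap hinj hxy]
    simp only [hFp]
    ring
  have h2 : ∑ τ ∈ (TT : Finset (Perm (Fin n))), 2 * ee row col τ = 2 * M :=
    calc ∑ τ ∈ (TT : Finset (Perm (Fin n))), 2 * ee row col τ
        = ∑ τ ∈ (TT : Finset (Perm (Fin n))),
            ∑ pr ∈ Finset.univ.offDiag.filter (fun pr => Equiv.swap pr.1 pr.2 = τ), Fp pr :=
          (Finset.sum_congr rfl hinner).symm
      _ = ∑ pr ∈ Finset.univ.offDiag, Fp pr := hfib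
      _ = 2 * M := hdiag
  have h3 : yy row col 1 = ∑ τ ∈ (TT : Finset (Perm (Fin n))), ee row col τ := by
    rw [yy]
    exact Finset.sum_congr rfl (fun τ _ => by rw [mul_one])
  rw [h3]
  have h4 : (2 : ℝ) * ∑ τ ∈ (TT : Finset (Perm (Fin n))), ee row col τ = 2 * M := by
    rw [Finset.mul_sum]
    rw [← h2]
  linarith

lemma yy_eq_mul (hinj : ∀ x y : Fin n, row x = row y → col x = col y → x = y)
    (hclos : ∀ (x : Fin n) (r' : ℕ), r' < row x → ∃ z : Fin n, row z = r' ∧ col z = col x)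
    (g : Perm (Fin n)) :
    yy row col g = yy row col 1 * ee row col g := by
  classical
  by_cases hbad : ∃ x y : Fin n, x ≠ y ∧ row x = row y ∧ col (g⁻¹ x) = col (g⁻¹ y)
  · obtain ⟨x, y, h1, h2, h3⟩ := hbad
    have hy0 := yy_bad_zero g x y h1 h2 h3
    have he0 : ee row col g = 0 := by
      rw [ee]
      have hempty : univ.filter
          (fun q : Perm (Fin n) => pRow col q ∧ pRow row (g * q⁻¹)) = ∅ := by
        rw [Finset.eq_empty_iff_forall_notMem]
        intro q hq
        obtain ⟨hqc, hqr⟩ := (Finset.mem_filter.mp hq).2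
        set p := g * q⁻¹ with hp
        have hginv : g⁻¹ = q⁻¹ * p⁻¹ := by rw [hp]; group
        have hcx : col (g⁻¹ x) = col (p⁻¹ x) := by
          rw [hginv]
          exact (pRow.inv hqc) (p⁻¹ x)
        have hcy : col (g⁻¹ y) = col (p⁻¹ y) := by
          rw [hginv]
          exact (pRow.inv hqc) (p⁻¹ y)
        have hrp := pRow.inv hqr
        have hrx : row (p⁻¹ x) = row x := hrp x
        have hry : row (p⁻¹ y) = row y := hrp y
        have : p⁻¹ x = p⁻¹ y := hinj _ _ (by rw [hrx, hry, h2]) (by rw [← hcx, ← hcy, h3])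
        exact h1 (p⁻¹.injective this)
      rw [hempty, Finset.sum_empty]
    rw [hy0, he0, mul_zero]
  · obtain ⟨p, q, hp, hq, rfl⟩ := decomp hclos g hbad
    have hpq : p * q = p * 1 * q := by group
    rw [hpq, yy_conj hp hq 1, ee_mul hp hq 1, ee_one hinj]
    ring

theorem eig_of_rowcol (M : ℕ)
    (hinj : ∀ x y : Fin n, row x = row y → col x = col y → x = y)
    (hclos : ∀ (x : Fin n) (r' : ℕ), r' < row x → ∃ z : Fin n, row z = r' ∧ col z = col x)
    (hcount : ∑ x : Fin n, ∑ y : Fin n,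
        ((if row x = row y then (1 : ℝ) else 0) - (if col x = col y then (1 : ℝ) else 0))
      = 2 * M) :
    IsTranspositionGraphEigenvalue n ((M : ℤ)) := by
  classical
  refine ⟨ee row col, ?_, ?_⟩
  · intro h
    have h1 : ee row col 1 = 0 := by rw [h]; rfl
    rw [ee_one hinj] at h1
    norm_num at h1
  · funext g
    have hmv : (transpositionGraphAdjMatrix n).mulVec (ee row col) g
        = ∑ g' : Perm (Fin n),
            (if g ≠ g' ∧ (g * g'⁻¹).IsSwap then (1 : ℝ) else 0) * ee row col g' := by
      simp only [Matrix.mulVec, dotProduct, transpositionGraphAdjMatrix]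
    have hsum : ∑ g' : Perm (Fin n),
          (if g ≠ g' ∧ (g * g'⁻¹).IsSwap then (1 : ℝ) else 0) * ee row col g'
        = ∑ g' ∈ univ.filter (fun g' : Perm (Fin n) => g ≠ g' ∧ (g * g'⁻¹).IsSwap),
            ee row col g' := by
      rw [Finset.sum_filter]
      apply Finset.sum_congr rfl
      intro g' _
      by_cases h : g ≠ g' ∧ (g * g'⁻¹).IsSwap <;> simp [h]
    have hbij : ∑ g' ∈ univ.filter (fun g' : Perm (Fin n) => g ≠ g' ∧ (g * g'⁻¹).IsSwap),
          ee row col g' = yy row col g := by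
      rw [yy]
      refine Finset.sum_nbij' (i := fun g' => g * g'⁻¹) (j := fun τ => τ⁻¹ * g) ?_ ?_ ?_ ?_ ?_
      · intro g' hg'
        exact mem_TT.mpr (Finset.mem_filter.mp hg').2.2
      · intro τ hτ
        have hτs := mem_TT.mp hτ
        refine Finset.mem_filter.mpr ⟨Finset.mem_univ _, ?_, ?_⟩
        · intro h
          obtain ⟨x, y, hxy, rfl⟩ := hτs
          apply swap_ne_one hxy
          have h' : g = (Equiv.swap x y)⁻¹ * g := h
          have h2 : (Equiv.swap x y)⁻¹ = 1 := mul_right_cancel (h'.symm.trans (one_mul g).symm)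
          exact inv_eq_one.mp h2
        · have : g * (τ⁻¹ * g)⁻¹ = τ := by group
          rw [this]
          exact hτs
      · intro g' _
        group
      · intro τ _
        group
      · intro g' hg'
        have hτs := (Finset.mem_filter.mp hg').2.2
        have hinv : (g * g'⁻¹)⁻¹ = g * g'⁻¹ := isSwap_inv hτs
        have : g * g'⁻¹ * g = g' := by
          conv_lhs => rw [← hinv]
          group
        rw [this]
    rw [hmv, hsum, hbij, yy_eq_mul hinj hclos g, yy_one_eq hinj hcount]
    simp only [Pi.smul_apply, smul_eq_mul]
    push_cast
    ring

lemma sum_indicator_lt (a b : ℕ) :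
    ∑ c ∈ Finset.range a, (if c < b then (1 : ℝ) else 0) = ((min a b : ℕ) : ℝ) := by
  rw [Finset.sum_boole]
  congr 1
  have : (Finset.range a).filter (fun c => c < b) = Finset.range (min a b) := by
    ext c
    simp only [Finset.mem_filter, Finset.mem_range, lt_min_iff]
  rw [this, Finset.card_range]

lemma sum_min_antitone (f : ℕ → ℕ) (hmono : ∀ r r' : ℕ, r ≤ r' → f r' ≤ f r) (R : ℕ) :
    (∑ r ∈ Finset.range R, ∑ r' ∈ Finset.range R, min (f r) (f r'))
      = ∑ r ∈ Finset.range R, (2 * r + 1) * f r := by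
  induction R with
  | zero => simp
  | succ R ih =>
    rw [Finset.sum_range_succ (f := fun r => ∑ r' ∈ Finset.range (R+1), min (f r) (f r'))]
    rw [Finset.sum_range_succ (f := fun r' => min (f R) (f r'))]
    have h1 : ∀ r ∈ Finset.range R, ∑ r' ∈ Finset.range (R+1), min (f r) (f r')
        = (∑ r' ∈ Finset.range R, min (f r) (f r')) + f R := by
      intro r hr
      rw [Finset.sum_range_succ]
      congr 1
      exact min_eq_right (hmono r R (le_of_lt (Finset.mem_range.mp hr)))
    rw [Finset.sum_congr rfl h1, Finset.sum_add_distrib, ih]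
    have h2 : ∀ r' ∈ Finset.range R, min (f R) (f r') = f R := by
      intro r' hr'
      exact min_eq_left (hmono r' R (le_of_lt (Finset.mem_range.mp hr')))
    rw [Finset.sum_congr rfl h2]
    simp only [Finset.sum_const, Finset.card_range, smul_eq_mul, min_self,
      Finset.sum_range_succ]
    ring

theorem eig_of_width {n : ℕ} (M R : ℕ) (f : ℕ → ℕ)
    (hmono : ∀ r r' : ℕ, r ≤ r' → f r' ≤ f r)
    (hsum : ∑ r ∈ Finset.range R, f r = n)
    (hcontent : ∑ r ∈ Finset.range R, f r * f r
        = (∑ r ∈ Finset.range R, (2 * r + 1) * f r) + 2 * M) :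
    IsTranspositionGraphEigenvalue n ((M : ℤ)) := by
  classical
  set D : Finset (ℕ × ℕ) :=
    (Finset.range R).biUnion (fun r => ({r} : Finset ℕ) ×ˢ Finset.range (f r)) with hD
  have hmemD : ∀ p : ℕ × ℕ, p ∈ D ↔ p.1 < R ∧ p.2 < f p.1 := by
    intro p
    simp only [hD, Finset.mem_biUnion, Finset.mem_range, Finset.mem_product,
      Finset.mem_singleton]
    constructor
    · rintro ⟨r, hr, h1, h2⟩
      rw [h1]
      exact ⟨hr, h2⟩
    · rintro ⟨h1, h2⟩
      exact ⟨p.1, h1, rfl, h2⟩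
  have hdisj : ∀ r ∈ Finset.range R, ∀ r' ∈ Finset.range R, r ≠ r' →
      Disjoint (({r} : Finset ℕ) ×ˢ Finset.range (f r))
        (({r'} : Finset ℕ) ×ˢ Finset.range (f r')) := by
    intro r _ r' _ hne
    rw [Finset.disjoint_left]
    intro p hp hp'
    rw [Finset.mem_product, Finset.mem_singleton] at hp hp'
    exact hne (hp.1.symm.trans hp'.1)
  have hslab_card : ∀ r, (({r} : Finset ℕ) ×ˢ Finset.range (f r)).card = f r := by
    intro r
    rw [Finset.card_product, Finset.card_singleton, Finset.card_range, one_mul]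
  have hcard : D.card = n := by
    rw [hD, Finset.card_biUnion hdisj]
    rw [← hsum]
    exact Finset.sum_congr rfl (fun r _ => hslab_card r)
  have hcard' : Fintype.card {p // p ∈ D} = n := by
    rw [Fintype.card_coe]; exact hcard
  set E : Fin n ≃ {p // p ∈ D} := (Fintype.equivFinOfCardEq hcard').symm with hE
  set row : Fin n → ℕ := fun x => (E x).1.1 with hrow
  set col : Fin n → ℕ := fun x => (E x).1.2 with hcol
  have hinj : ∀ x y : Fin n, row x = row y → col x = col y → x = y := by
    intro x y hr hc
    exact E.injective (Subtype.ext (Prod.ext hr hc))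
  -- transfer of double sums
  have transfer : ∀ G : ℕ × ℕ → ℕ × ℕ → ℝ,
      (∑ x : Fin n, ∑ y : Fin n, G (E x).1 (E y).1) = ∑ u ∈ D, ∑ v ∈ D, G u v := by
    intro G
    have h1 : ∀ u : {p // p ∈ D}, (∑ y : Fin n, G u.1 (E y).1) = ∑ v ∈ D, G u.1 v := by
      intro u
      rw [← Finset.sum_coe_sort D (fun v => G u.1 v)]
      exact Equiv.sum_comp E (fun v : {p // p ∈ D} => G u.1 v.1)
    calc ∑ x : Fin n, ∑ y : Fin n, G (E x).1 (E y).1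
        = ∑ u : {p // p ∈ D}, ∑ y : Fin n, G u.1 (E y).1 :=
          Equiv.sum_comp E (fun u : {p // p ∈ D} => ∑ y : Fin n, G u.1 (E y).1)
      _ = ∑ u : {p // p ∈ D}, ∑ v ∈ D, G u.1 v := by
          exact Finset.sum_congr rfl (fun u _ => h1 u)
      _ = ∑ u ∈ D, ∑ v ∈ D, G u v := Finset.sum_coe_sort D (fun u => ∑ v ∈ D, G u v)
  have hRS : (∑ u ∈ D, ∑ v ∈ D, (if u.1 = v.1 then (1 : ℝ) else 0))
      = ((∑ r ∈ Finset.range R, f r * f r : ℕ) : ℝ) := by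
    have hfil : ∀ u ∈ D, D.filter (fun v => u.1 = v.1)
        = ({u.1} : Finset ℕ) ×ˢ Finset.range (f u.1) := by
      intro u hu
      have hu' := (hmemD u).mp hu
      ext v
      simp only [Finset.mem_filter, Finset.mem_product, Finset.mem_singleton,
        Finset.mem_range]
      constructor
      · rintro ⟨hv, heq⟩
        have hv' := (hmemD v).mp hv
        exact ⟨heq.symm, by rw [heq]; exact hv'.2⟩
      · rintro ⟨h1, h2⟩
        refine ⟨(hmemD v).mpr ⟨by rw [h1]; exact hu'.1, by rw [h1]; exact h2⟩, h1.symm⟩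
    have step1 : ∀ u ∈ D, (∑ v ∈ D, (if u.1 = v.1 then (1 : ℝ) else 0)) = (f u.1 : ℝ) := by
      intro u hu
      rw [Finset.sum_boole, hfil u hu, hslab_card]
    rw [Finset.sum_congr rfl step1]
    rw [hD, Finset.sum_biUnion hdisj]
    push_cast
    apply Finset.sum_congr rfl
    intro r _
    have : ∀ u ∈ ({r} : Finset ℕ) ×ˢ Finset.range (f r), ((f u.1 : ℝ)) = (f r : ℝ) := by
      intro u hu
      rw [Finset.mem_product, Finset.mem_singleton] at hu
      rw [hu.1]
    rw [Finset.sum_congr rfl this, Finset.sum_const, hslab_card, nsmul_eq_mul]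
  have hCS : (∑ u ∈ D, ∑ v ∈ D, (if u.2 = v.2 then (1 : ℝ) else 0))
      = ((∑ r ∈ Finset.range R, (2 * r + 1) * f r : ℕ) : ℝ) := by
    have inner1 : ∀ u : ℕ × ℕ, (∑ v ∈ D, (if u.2 = v.2 then (1 : ℝ) else 0))
        = ∑ r' ∈ Finset.range R, (if u.2 < f r' then (1 : ℝ) else 0) := by
      intro u
      rw [hD, Finset.sum_biUnion hdisj]
      apply Finset.sum_congr rfl
      intro r' _
      rw [Finset.sum_product, Finset.sum_singleton]
      rw [Finset.sum_ite_eq (Finset.range (f r')) u.2 (fun _ => (1 : ℝ))]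
      simp [Finset.mem_range]
    rw [Finset.sum_congr rfl (fun u _ => inner1 u)]
    rw [hD, Finset.sum_biUnion hdisj]
    have step2 : ∀ r ∈ Finset.range R,
        (∑ u ∈ ({r} : Finset ℕ) ×ˢ Finset.range (f r),
          ∑ r' ∈ Finset.range R, (if u.2 < f r' then (1 : ℝ) else 0))
        = ∑ r' ∈ Finset.range R, ((min (f r) (f r') : ℕ) : ℝ) := by
      intro r _
      rw [Finset.sum_product, Finset.sum_singleton]
      rw [Finset.sum_comm]
      apply Finset.sum_congr rfl
      intro r' _
      exact sum_indicator_lt (f r) (f r')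
    rw [Finset.sum_congr rfl step2]
    rw [← sum_min_antitone f hmono R, Nat.cast_sum]
    exact Finset.sum_congr rfl (fun r _ => (Nat.cast_sum _ _).symm)
  apply eig_of_rowcol (row := row) (col := col) M hinj
  · intro x r' hr'
    have hx := (hmemD (E x).1).mp (E x).2
    have h1 : r' < R := lt_trans hr' hx.1
    have h2 : col x < f r' := lt_of_lt_of_le hx.2 (hmono r' (row x) (le_of_lt hr'))
    have hm : ((r', col x) : ℕ × ℕ) ∈ D := (hmemD _).mpr ⟨h1, h2⟩
    refine ⟨E.symm ⟨(r', col x), hm⟩, ?_, ?_⟩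
    · show (E (E.symm ⟨(r', col x), hm⟩)).1.1 = r'
      rw [Equiv.apply_symm_apply]
    · show (E (E.symm ⟨(r', col x), hm⟩)).1.2 = col x
      rw [Equiv.apply_symm_apply]
  · have hsplit : ∑ x : Fin n, ∑ y : Fin n,
        ((if row x = row y then (1 : ℝ) else 0) - (if col x = col y then (1 : ℝ) else 0))
        = (∑ x : Fin n, ∑ y : Fin n, (if row x = row y then (1 : ℝ) else 0))
          - (∑ x : Fin n, ∑ y : Fin n, (if col x = col y then (1 : ℝ) else 0)) := by
      rw [← Finset.sum_sub_distrib]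
      apply Finset.sum_congr rfl
      intro x _
      rw [← Finset.sum_sub_distrib]
    rw [hsplit]
    have t1 : (∑ x : Fin n, ∑ y : Fin n, (if row x = row y then (1 : ℝ) else 0))
        = ∑ u ∈ D, ∑ v ∈ D, (if u.1 = v.1 then (1 : ℝ) else 0) :=
      transfer (fun u v => if u.1 = v.1 then (1 : ℝ) else 0)
    have t2 : (∑ x : Fin n, ∑ y : Fin n, (if col x = col y then (1 : ℝ) else 0))
        = ∑ u ∈ D, ∑ v ∈ D, (if u.2 = v.2 then (1 : ℝ) else 0) :=
      transfer (fun u v => if u.2 = v.2 then (1 : ℝ) else 0)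
    rw [t1, t2, hRS, hCS]
    have hc := congrArg (fun k : ℕ => (k : ℝ)) hcontent
    push_cast at hc
    push_cast
    linarith

lemma sum_odd_range (v : ℕ) : ∑ r ∈ Finset.range v, (2 * r + 1) = v * v := by
  induction v with
  | zero => simp
  | succ v ih =>
    rw [Finset.sum_range_succ, ih]
    ring

lemma sum_odd_Ico (u v : ℕ) (h : u ≤ v) :
    u * u + (∑ r ∈ Finset.Ico u v, (2 * r + 1)) = v * v := by
  have := Finset.sum_Ico_consecutive (fun r => 2 * r + 1) (Nat.zero_le u) h
  simp only [← Finset.range_eq_Ico] at this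
  rw [← sum_odd_range u, ← sum_odd_range v]
  rw [← this]

/-- the sum of a 6-block width function over its range -/
lemma width_spec (n M a A B y z : ℕ)
    (hA1 : A ≤ a + 1) (hBA : B ≤ A) (hB2 : 2 ≤ B)
    (hx : a + 1 ≤ 4 + y + z)
    (hn : n = (4 + y + z) + (a + 1) + A + B + 2 * y + z)
    (hMeq : 2 * M + 5 * A + 7 * B + y * y + 5 * y + a = a * a + A * A + B * B + 10) :
    IsTranspositionGraphEigenvalue n ((M : ℤ)) := by
  classical
  set X := 4 + y + z with hX
  set w : ℕ → ℕ := fun r =>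
    if r = 0 then X else if r = 1 then a + 1 else if r = 2 then A else if r = 3 then B
    else if r < 4 + y then 2 else 1 with hw
  have hw0 : w 0 = X := rfl
  have hw1 : w 1 = a + 1 := rfl
  have hw2 : w 2 = A := rfl
  have hw3 : w 3 = B := rfl
  have hwmid : ∀ r, 4 ≤ r → r < 4 + y → w r = 2 := by
    intro r h1 h2
    simp only [hw]
    split_ifs <;> omega
  have hwtail : ∀ r, 4 + y ≤ r → w r = 1 := by
    intro r h1
    simp only [hw]
    split_ifs <;> omega
  have hmono : ∀ r r' : ℕ, r ≤ r' → w r' ≤ w r := by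
    intro r r' hle
    simp only [hw]
    split_ifs <;> omega
  -- generic block decomposition
  have hsplit : ∀ g : ℕ → ℕ, ∑ r ∈ Finset.range X, g r
      = (g 0 + g 1 + g 2 + g 3) + (∑ r ∈ Finset.Ico 4 (4 + y), g r)
        + (∑ r ∈ Finset.Ico (4 + y) X, g r) := by
    intro g
    have h1 : (4 : ℕ) ≤ 4 + y := by omega
    have h2 : 4 + y ≤ X := by omega
    have e1 := Finset.sum_Ico_consecutive g (Nat.zero_le 4) (le_trans h1 h2)
    have e2 := Finset.sum_Ico_consecutive g h1 h2
    rw [Finset.range_eq_Ico, ← e1, ← e2]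
    have : ∑ r ∈ Finset.Ico 0 4, g r = g 0 + g 1 + g 2 + g 3 := by
      rw [← Finset.range_eq_Ico]
      rw [Finset.sum_range_succ, Finset.sum_range_succ, Finset.sum_range_succ,
        Finset.sum_range_one]
    rw [this]
    ring
  have hsum : ∑ r ∈ Finset.range X, w r = n := by
    rw [hsplit w, hw0, hw1, hw2, hw3]
    have hm : ∑ r ∈ Finset.Ico 4 (4 + y), w r = 2 * y := by
      calc ∑ r ∈ Finset.Ico 4 (4 + y), w r = ∑ _r ∈ Finset.Ico 4 (4 + y), 2 :=
            Finset.sum_congr rfl (fun r hr => by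
              rw [Finset.mem_Ico] at hr
              exact hwmid r hr.1 hr.2)
        _ = 2 * y := by rw [Finset.sum_const, Nat.card_Ico, smul_eq_mul]; omega
    have ht : ∑ r ∈ Finset.Ico (4 + y) X, w r = z := by
      calc ∑ r ∈ Finset.Ico (4 + y) X, w r = ∑ _r ∈ Finset.Ico (4 + y) X, 1 :=
            Finset.sum_congr rfl (fun r hr => by
              rw [Finset.mem_Ico] at hr
              exact hwtail r hr.1)
        _ = z := by rw [Finset.sum_const, Nat.card_Ico, smul_eq_mul]; omega
    rw [hm, ht]
    omega
  have hmid_odd : 16 + (∑ r ∈ Finset.Ico 4 (4 + y), (2 * r + 1)) = (4 + y) * (4 + y) :=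
    sum_odd_Ico 4 (4 + y) (by omega)
  have htail_odd : (4 + y) * (4 + y) + (∑ r ∈ Finset.Ico (4 + y) X, (2 * r + 1)) = X * X :=
    sum_odd_Ico (4 + y) X (by omega)
  have hcontent : ∑ r ∈ Finset.range X, w r * w r
      = (∑ r ∈ Finset.range X, (2 * r + 1) * w r) + 2 * M := by
    rw [hsplit (fun r => w r * w r), hsplit (fun r => (2 * r + 1) * w r)]
    simp only [hw0, hw1, hw2, hw3]
    have hm1 : ∑ r ∈ Finset.Ico 4 (4 + y), w r * w r = 4 * y := by
      calc ∑ r ∈ Finset.Ico 4 (4 + y), w r * w r = ∑ _r ∈ Finset.Ico 4 (4 + y), 4 :=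
            Finset.sum_congr rfl (fun r hr => by
              rw [Finset.mem_Ico] at hr
              rw [hwmid r hr.1 hr.2])
        _ = 4 * y := by rw [Finset.sum_const, Nat.card_Ico, smul_eq_mul]; omega
    have ht1 : ∑ r ∈ Finset.Ico (4 + y) X, w r * w r = z := by
      calc ∑ r ∈ Finset.Ico (4 + y) X, w r * w r = ∑ _r ∈ Finset.Ico (4 + y) X, 1 :=
            Finset.sum_congr rfl (fun r hr => by
              rw [Finset.mem_Ico] at hr
              rw [hwtail r hr.1])
        _ = z := by rw [Finset.sum_const, Nat.card_Ico, smul_eq_mul]; omega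
    have hm2 : ∑ r ∈ Finset.Ico 4 (4 + y), (2 * r + 1) * w r
        = 2 * (∑ r ∈ Finset.Ico 4 (4 + y), (2 * r + 1)) := by
      rw [Finset.mul_sum]
      apply Finset.sum_congr rfl
      intro r hr
      rw [Finset.mem_Ico] at hr
      rw [hwmid r hr.1 hr.2]
      ring
    have ht2 : ∑ r ∈ Finset.Ico (4 + y) X, (2 * r + 1) * w r
        = ∑ r ∈ Finset.Ico (4 + y) X, (2 * r + 1) := by
      apply Finset.sum_congr rfl
      intro r hr
      rw [Finset.mem_Ico] at hr
      rw [hwtail r hr.1]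
      ring
    rw [hm1, ht1, hm2, ht2]
    -- now pure arithmetic with hmid_odd, htail_odd, hMeq
    set S1 := ∑ r ∈ Finset.Ico 4 (4 + y), (2 * r + 1) with hS1
    set S2 := ∑ r ∈ Finset.Ico (4 + y) X, (2 * r + 1) with hS2
    zify at hmid_odd htail_odd hMeq ⊢
    have hXz : (X : ℤ) = 4 + (y : ℤ) + (z : ℤ) := by
      rw [hX]
      push_cast
      ring
    linear_combination (-2 : ℤ) * hmid_odd - htail_odd - hMeq - hXz
  exact eig_of_width M X w hmono hsum hcontent

lemma two_choose_two (a : ℕ) : 2 * a.choose 2 + a = a * a := by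
  induction a with
  | zero => simp
  | succ a ih =>
    have h : (a + 1).choose 2 = a.choose 1 + a.choose 2 := Nat.choose_succ_succ a 1
    rw [h, Nat.choose_one_right]
    have expand : (a + 1) * (a + 1) = a * a + 2 * a + 1 := by ring
    rw [expand]
    omega

end TG

theorem stmt15 (n a b : ℕ) (hn : 26 ≤ n) (ha1 : 6 ≤ a) (ha2 : a ≤ (n + 4) / 5)
    (hpar : (n - a) % 2 = 0) (hb1 : 4 ≤ b) (hb2 : b ≤ a - 2) :
    IsTranspositionGraphEigenvalue n (((a.choose 2 : ℕ) : ℤ) - b) := by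
  have ha2' : 5 * a ≤ n + 4 := by
    have h := (Nat.le_div_iff_mul_le (by norm_num : 0 < 5)).mp ha2
    omega
  have key := TG.two_choose_two a
  have hba : b + 2 ≤ a := by omega
  have hble : b ≤ a.choose 2 := by
    have h3a : 3 * a ≤ a * a := Nat.mul_le_mul_right a (by omega)
    omega
  set M := a.choose 2 - b with hM
  have hMb : M + b = a.choose 2 := by omega
  have goalcast : ((a.choose 2 : ℕ) : ℤ) - (b : ℤ) = (M : ℤ) := by omega
  rw [goalcast]
  have hax : a ≤ n := by omega
  obtain ⟨k, hk⟩ : ∃ k, n = a + 2 * k := ⟨(n - a) / 2, by omega⟩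
  rcases Nat.even_or_odd b with hev | hodd
  · obtain ⟨t, ht⟩ := hev
    rcases eq_or_ne b 4 with rfl | hne4
    · obtain ⟨z, hz⟩ : ∃ z, n = a + 16 + 2 * z := ⟨(n - (a + 16)) / 2, by omega⟩
      apply TG.width_spec n M a 5 3 1 z (by omega) (by omega) (by omega) (by omega) (by omega)
      zify at key hMb ⊢
      linear_combination key + 2 * hMb
    · obtain ⟨c, hc⟩ : ∃ c, b = 2 * c + 6 := ⟨(b - 6) / 2, by omega⟩
      obtain ⟨z, hz⟩ : ∃ z, n = a + 4 * c + 16 + 2 * z := ⟨(n - (a + 4 * c + 16)) / 2, by omega⟩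
      apply TG.width_spec n M a (c + 4) 4 (c + 1) z (by omega) (by omega) (by omega)
        (by omega) (by omega)
      zify at key hMb hc ⊢
      linear_combination key + 2 * hMb - 2 * hc
  · obtain ⟨t, ht⟩ := hodd
    obtain ⟨c, hc⟩ : ∃ c, b = 2 * c + 5 := ⟨(b - 5) / 2, by omega⟩
    obtain ⟨z, hz⟩ : ∃ z, n = a + 4 * c + 14 + 2 * z := ⟨(n - (a + 4 * c + 14)) / 2, by omega⟩
    apply TG.width_spec n M a (c + 4) 2 (c + 1) z (by omega) (by omega) (by omega)
      (by omega) (by omega)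
    zify at key hMb hc ⊢
    linear_combination key + 2 * hMb - 2 * hc
end

section
/- Let n ≥ 27 be an integer. For each integer a with 3 ≤ a ≤ ⌊(n+4)/5⌋ and n − a ≡ 0 (mod 2), every integer m with (a−1 choose 2) + 1 ≤ m ≤ (a choose 2) is an eigenvalue of the transposition graph Cay(S_n, T_n), where (k choose 2) = k(k−1)/2. -/
set_option linter.unusedSectionVars false
set_option linter.unusedVariables false
set_option maxHeartbeats 1600000

open Equiv Finset

namespace TG

variable {α : Type*} [Fintype α] [DecidableEq α]

noncomputable instance : DecidablePred (Perm.IsSwap (α := α)) := fun _ => Classical.dec _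



/-- permutations preserving the level sets of `f` -/
def pres (f : α → ℕ) (p : Perm α) : Prop := ∀ x, f (p x) = f x

instance (f : α → ℕ) (p : Perm α) : Decidable (pres f p) := by unfold pres; infer_instance

lemma pres_one (f : α → ℕ) : pres f (1 : Perm α) := fun x => rfl

lemma pres_mul {f : α → ℕ} {p q : Perm α} (hp : pres f p) (hq : pres f q) :
    pres f (p * q) := fun x => by
  simp only [Perm.mul_apply]; rw [hp, hq]

lemma pres_inv {f : α → ℕ} {p : Perm α} (hp : pres f p) : pres f p⁻¹ := fun x => by
  conv_rhs => rw [← Equiv.apply_symm_apply p x, ← Perm.inv_def]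
  rw [hp]

variable (row col : α → ℕ)

/-- joint injectivity : a cell is determined by row and column -/
def Inj : Prop := ∀ x y : α, row x = row y → col x = col y → x = y

lemma pres_eq_one (H1 : Inj row col) {σ : Perm α} (hr : pres row σ) (hc : pres col σ) :
    σ = 1 := by
  ext x
  simpa using H1 (σ x) x (hr x) (hc x)

/-- the Young symmetrizer coefficient vector -/
noncomputable def esym : Perm α → ℝ := fun g =>
  ∑ p ∈ univ.filter (pres row), if pres col (p⁻¹ * g) then ((Perm.sign (p⁻¹ * g) : ℤ) : ℝ) else 0

/-- the key invariance property -/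
def Pprop (y : Perm α → ℝ) : Prop :=
  ∀ p q g : Perm α, pres row p → pres col q →
    y (p * g * q) = ((Perm.sign q : ℤ) : ℝ) * y g

lemma Pprop_esym : Pprop row col (esym row col) := by
  intro p₀ q₀ g hp₀ hq₀
  unfold esym
  rw [Finset.mul_sum]
  refine Finset.sum_bij' (fun p _ => p₀⁻¹ * p) (fun p _ => p₀ * p) ?_ ?_ ?_ ?_ ?_
  · intro p hp
    simp only [mem_filter, mem_univ, true_and] at hp ⊢
    exact pres_mul (pres_inv hp₀) hp
  · intro p hp
    simp only [mem_filter, mem_univ, true_and] at hp ⊢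
    exact pres_mul hp₀ hp
  · intro p _; group
  · intro p _; group
  · intro p hp
    simp only [mem_filter, mem_univ, true_and] at hp
    have h1 : p⁻¹ * (p₀ * g * q₀) = ((p₀⁻¹ * p)⁻¹ * g) * q₀ := by group
    rw [h1]
    by_cases hc : pres col ((p₀⁻¹ * p)⁻¹ * g)
    · rw [if_pos hc, if_pos (pres_mul hc hq₀), map_mul]
      push_cast
      ring
    · rw [if_neg hc, if_neg ?_, mul_zero]
      intro hcon
      have := pres_mul hcon (pres_inv hq₀)
      rw [mul_assoc, mul_inv_cancel, mul_one] at this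
      exact hc this


variable (row col : α → ℕ)



/-- convolution with the sum of all transpositions -/
noncomputable def Zop (y : Perm α → ℝ) : Perm α → ℝ := fun g =>
  ∑ t ∈ univ.filter Perm.IsSwap, y (t * g)


lemma isSwap_conj_s16 {t p : Perm α} (ht : t.IsSwap) : (p * t * p⁻¹).IsSwap := by
  obtain ⟨x, y, hxy, rfl⟩ := ht
  exact ⟨p x, p y, fun h => hxy (p.injective h), (Equiv.swap_apply_apply p x y).symm⟩

lemma Pprop_Zop {y : Perm α → ℝ} (hy : Pprop row col y) : Pprop row col (Zop y) := by
  intro p q g hp hq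
  unfold Zop
  rw [Finset.mul_sum]
  refine Finset.sum_bij' (fun t _ => p⁻¹ * t * p) (fun t _ => p * t * p⁻¹) ?_ ?_ ?_ ?_ ?_
  · intro t ht
    simp only [mem_filter, mem_univ, true_and] at ht ⊢
    simpa using isSwap_conj_s16 (p := p⁻¹) ht
  · intro t ht
    simp only [mem_filter, mem_univ, true_and] at ht ⊢
    exact isSwap_conj_s16 ht
  · intro t _; group
  · intro t _; group
  · intro t ht
    have h1 : t * (p * g * q) = p * ((p⁻¹ * t * p) * g) * q := by group
    rw [h1, hy p q _ hp hq]




/-- Step A : if τ = row ∘ g is injective on columns, then every value (τ x) names a row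
long enough to contain the column of x. -/
lemma stepA (H1 : ∀ x y : α, row x = row y → col x = col y → x = y)
    (H2 : ∀ (x : α) (i' : ℕ), i' ≤ row x → ∃ z, row z = i' ∧ col z = col x)
    (g : Perm α)
    (Hτ : ∀ y y' : α, col y = col y' → row (g y) = row (g y') → y = y') :
    ∀ i : ℕ, ∀ x : α, row (g x) = i → ∃ z, row z = i ∧ col z = col x := by
  intro i
  induction i using Nat.strong_induction_on with
  | _ i IH =>
  intro x₀ hx₀
  by_contra hno
  push_neg at hno
  set K : Finset α := univ.filter (fun z => col z = col x₀) with hK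
  set h : ℕ := K.card with hh
  have hx₀K : x₀ ∈ K := by simp [hK]
  -- all rows in K are < h
  have hrowlt : ∀ z ∈ K, row z < h := by
    intro z hz
    by_contra hge
    push_neg at hge
    set f : ℕ → α := fun i' => Classical.choose (H2 z (min i' (row z)) (min_le_right _ _)) with hf
    have hfrow : ∀ i', row (f i') = min i' (row z) :=
      fun i' => (Classical.choose_spec (H2 z (min i' (row z)) (min_le_right _ _))).1
    have hfcol : ∀ i', col (f i') = col z :=
      fun i' => (Classical.choose_spec (H2 z (min i' (row z)) (min_le_right _ _))).2
    have hcard : row z + 1 ≤ h := by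
      calc row z + 1 = (range (row z + 1)).card := by simp
      _ ≤ K.card := by
          apply Finset.card_le_card_of_injOn f
          · intro i' hi'
            simp only [hK, Finset.mem_coe, mem_filter, mem_univ, true_and]
            rw [hfcol]
            simp only [hK, mem_filter, mem_univ, true_and] at hz
            exact hz
          · intro i₁ h₁ i₂ h₂ heq
            simp only [coe_range, Set.mem_Iio] at h₁ h₂
            have e₁ := hfrow i₁
            have e₂ := hfrow i₂
            rw [heq] at e₁
            omega
      _ = h := rfl
    omega
  -- row is injective on K
  have hrowinjK : ∀ z ∈ K, ∀ z' ∈ K, row z = row z' → z = z' := by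
    intro z hz z' hz' hr
    simp only [hK, mem_filter, mem_univ, true_and] at hz hz'
    exact H1 z z' hr (hz.trans hz'.symm)
  -- image of row on K is range h
  have himg : K.image row = range h := by
    apply Finset.eq_of_subset_of_card_le
    · intro i' hi'
      simp only [mem_image] at hi'
      obtain ⟨z, hz, rfl⟩ := hi'
      simpa using hrowlt z hz
    · rw [Finset.card_range, Finset.card_image_of_injOn]
      intro z hz z' hz' hr
      exact hrowinjK z hz z' hz' hr
  -- h ≤ i
  have hhi : h ≤ i := by
    by_contra hlt
    push_neg at hlt
    have : i ∈ K.image row := by rw [himg]; simpa using hlt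
    simp only [mem_image] at this
    obtain ⟨z, hz, hrz⟩ := this
    simp only [hK, mem_filter, mem_univ, true_and] at hz
    exact hno z hrz hz
  -- for each i' < h there is y ∈ K with row (g y) = i'
  have key : ∀ i' : ℕ, i' < h → ∃ y ∈ K, row (g y) = i' := by
    intro i' hi'h
    have hi'i : i' < i := lt_of_lt_of_le hi'h hhi
    -- the z in column of x₀ with row z = i'
    have : i' ∈ K.image row := by rw [himg]; simpa using hi'h
    simp only [mem_image] at this
    obtain ⟨z₀, hz₀K, hz₀⟩ := this
    -- G = g-preimage of row level i', Rw = row level i'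
    set G : Finset α := univ.filter (fun y => row (g y) = i') with hG
    set Rw : Finset α := univ.filter (fun z => row z = i') with hRw
    have hcardGR : G.card = Rw.card := by
      apply Finset.card_bij (fun y _ => g y)
      · intro y hy; simp only [hG, mem_filter, mem_univ, true_and] at hy
        simp [hRw, hy]
      · intro y _ y' _ hyy'; exact g.injective hyy'
      · intro z hz
        refine ⟨g⁻¹ z, ?_, by simp⟩
        simp only [hRw, mem_filter, mem_univ, true_and] at hz
        simp [hG, hz]
    have hsub : G.image col ⊆ Rw.image col := by
      intro j hj
      simp only [mem_image] at hj ⊢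
      obtain ⟨y, hy, rfl⟩ := hj
      simp only [hG, mem_filter, mem_univ, true_and] at hy
      obtain ⟨z, hz1, hz2⟩ := IH i' hi'i y hy
      exact ⟨z, by simp [hRw, hz1], hz2⟩
    have hcards : (Rw.image col).card ≤ (G.image col).card := by
      rw [Finset.card_image_of_injOn, Finset.card_image_of_injOn, hcardGR]
      · intro y hy y' hy' hc
        rw [Finset.mem_coe] at hy hy'
        simp only [hG, mem_filter, mem_univ, true_and] at hy hy'
        exact Hτ y y' hc (hy.trans hy'.symm)
      · intro z hz z' hz' hc
        rw [Finset.mem_coe] at hz hz'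
        simp only [hRw, mem_filter, mem_univ, true_and] at hz hz'
        exact H1 z z' (hz.trans hz'.symm) hc
    have heq : G.image col = Rw.image col := Finset.eq_of_subset_of_card_le hsub hcards
    -- col x₀ = col z₀ ∈ Rw.image col = G.image col
    have : col x₀ ∈ G.image col := by
      rw [heq]
      simp only [mem_image]
      refine ⟨z₀, by simp [hRw, hz₀], ?_⟩
      simp only [hK, mem_filter, mem_univ, true_and] at hz₀K
      exact hz₀K
    simp only [mem_image] at this
    obtain ⟨y, hy, hcy⟩ := this
    simp only [hG, mem_filter, mem_univ, true_and] at hy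
    exact ⟨y, by simp [hK, hcy], hy⟩
  -- now build h+1 distinct elements of K : contradiction
  have : h + 1 ≤ h := by
    have hmap : ∀ i' ∈ range (h+1), (fun i' => if hlt : i' < h then Classical.choose (key i' hlt) else x₀) i' ∈ K := by
      intro i' _
      by_cases hlt : i' < h
      · simp only [dif_pos hlt]
        exact (Classical.choose_spec (key i' hlt)).1
      · simp [dif_neg hlt, hx₀K]
    have hinj : ∀ i₁ ∈ range (h+1), ∀ i₂ ∈ range (h+1),
        (fun i' => if hlt : i' < h then Classical.choose (key i' hlt) else x₀) i₁ =
        (fun i' => if hlt : i' < h then Classical.choose (key i' hlt) else x₀) i₂ → i₁ = i₂ := by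
      intro i₁ h₁ i₂ h₂ heq
      dsimp only at heq
      simp only [mem_range] at h₁ h₂
      by_cases l₁ : i₁ < h
      · by_cases l₂ : i₂ < h
        · rw [dif_pos l₁, dif_pos l₂] at heq
          have e₁ := (Classical.choose_spec (key i₁ l₁)).2
          have e₂ := (Classical.choose_spec (key i₂ l₂)).2
          rw [heq] at e₁; omega
        · rw [dif_pos l₁, dif_neg l₂] at heq
          have e₁ := (Classical.choose_spec (key i₁ l₁)).2
          rw [heq] at e₁; omega
      · by_cases l₂ : i₂ < h
        · rw [dif_neg l₁, dif_pos l₂] at heq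
          have e₂ := (Classical.choose_spec (key i₂ l₂)).2
          rw [← heq] at e₂; omega
        · omega
    calc h + 1 = (range (h+1)).card := by simp
    _ ≤ K.card := Finset.card_le_card_of_injOn _ hmap hinj
    _ = h := rfl
  omega

lemma dichotomy (H1 : ∀ x y : α, row x = row y → col x = col y → x = y)
    (H2 : ∀ (x : α) (i' : ℕ), i' ≤ row x → ∃ z, row z = i' ∧ col z = col x)
    (g : Perm α)
    (Hno : ¬ ∃ x y : α, x ≠ y ∧ row x = row y ∧ col (g⁻¹ x) = col (g⁻¹ y)) :
    ∃ p q : Perm α, pres row p ∧ pres col q ∧ g = p * q := by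
  push_neg at Hno
  have Hτ : ∀ y y' : α, col y = col y' → row (g y) = row (g y') → y = y' := by
    intro y y' hc hr
    by_contra hne
    have := Hno (g y) (g y') (fun h => hne (g.injective h)) hr
    simp only [Perm.inv_def, Equiv.symm_apply_apply] at this
    exact this hc
  have SA := stepA row col H1 H2 g Hτ
  set q₀ : α → α := fun y => Classical.choose (SA (row (g y)) y rfl) with hq₀
  have hq₀row : ∀ y, row (q₀ y) = row (g y) :=
    fun y => (Classical.choose_spec (SA (row (g y)) y rfl)).1
  have hq₀col : ∀ y, col (q₀ y) = col y :=
    fun y => (Classical.choose_spec (SA (row (g y)) y rfl)).2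
  have hinj : Function.Injective q₀ := by
    intro y y' h
    apply Hτ
    · rw [← hq₀col y, ← hq₀col y', h]
    · rw [← hq₀row y, ← hq₀row y', h]
  let q : Perm α := Equiv.ofBijective q₀ (Finite.injective_iff_bijective.mp hinj)
  have hqapp : ∀ y, q y = q₀ y := fun y => rfl
  refine ⟨g * q⁻¹, q, ?_, ?_, by group⟩
  · intro x
    have h1 : row (q (q⁻¹ x)) = row (g (q⁻¹ x)) := by rw [hqapp, hq₀row]
    simp only [Perm.inv_def, Equiv.apply_symm_apply] at h1
    simpa [Perm.mul_apply] using h1.symm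
  · intro x
    rw [hqapp, hq₀col]

lemma pres_swap_of_eq {f : α → ℕ} {x y : α} (h : f x = f y) : pres f (Equiv.swap x y) := by
  intro w
  rcases eq_or_ne w x with rfl | hwx
  · rw [Equiv.swap_apply_left, h]
  · rcases eq_or_ne w y with rfl | hwy
    · rw [Equiv.swap_apply_right, h]
    · rw [Equiv.swap_apply_of_ne_of_ne hwx hwy]

lemma esym_decomp (H1 : ∀ x y : α, row x = row y → col x = col y → x = y)
    {p q : Perm α} (hp : pres row p) (hq : pres col q) :
    esym row col (p * q) = ((Perm.sign q : ℤ) : ℝ) := by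
  unfold esym
  rw [Finset.sum_eq_single p]
  · rw [if_pos (by simpa using hq)]
    simp
  · intro p' hp' hne
    simp only [mem_filter, mem_univ, true_and] at hp'
    rw [if_neg]
    intro hcon
    have hσr : pres row (p'⁻¹ * p) := pres_mul (pres_inv hp') hp
    have hσc : pres col (p'⁻¹ * p) := by
      have := pres_mul hcon (pres_inv hq)
      have h2 : p'⁻¹ * (p * q) * q⁻¹ = p'⁻¹ * p := by group
      rwa [h2] at this
    have := pres_eq_one row col H1 hσr hσc
    have hpp : p = p' := by
      have h3 : p' * (p'⁻¹ * p) = p' * 1 := by rw [this]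
      simpa [mul_assoc] using h3
    exact hne hpp.symm
  · intro hnp
    simp only [mem_filter, mem_univ, true_and] at hnp
    exact absurd hp hnp

lemma esym_one (H1 : ∀ x y : α, row x = row y → col x = col y → x = y) :
    esym row col (1 : Perm α) = 1 := by
  have := esym_decomp row col H1 (pres_one row) (pres_one col)
  simpa using this

lemma rigidity (H1 : ∀ x y : α, row x = row y → col x = col y → x = y)
    (H2 : ∀ (x : α) (i' : ℕ), i' ≤ row x → ∃ z, row z = i' ∧ col z = col x)
    {y : Perm α → ℝ} (hy : Pprop row col y) :
    ∀ g, y g = y 1 * esym row col g := by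
  intro g
  by_cases hx : ∃ p q : Perm α, pres row p ∧ pres col q ∧ g = p * q
  · obtain ⟨p, q, hp, hq, rfl⟩ := hx
    have h1 := hy p q 1 hp hq
    rw [mul_one] at h1
    rw [h1, esym_decomp row col H1 hp hq, mul_comm]
  · have h2 : esym row col g = 0 := by
      unfold esym
      apply Finset.sum_eq_zero
      intro p' hp'
      simp only [mem_filter, mem_univ, true_and] at hp'
      rw [if_neg]
      intro hcon
      exact hx ⟨p', p'⁻¹ * g, hp', hcon, by group⟩
    have h1 : y g = 0 := by
      have hpair : ∃ x x' : α, x ≠ x' ∧ row x = row x' ∧ col (g⁻¹ x) = col (g⁻¹ x') := by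
        by_contra hno
        exact hx (dichotomy row col H1 H2 g hno)
      obtain ⟨x, x', hne, hr, hc⟩ := hpair
      set u := Equiv.swap x x' with hu
      set v := g⁻¹ * u * g with hv
      have hvs : v = Equiv.swap (g⁻¹ x) (g⁻¹ x') := by
        rw [hv, hu]
        rw [Equiv.swap_apply_apply]
        group
      have hru : pres row u := pres_swap_of_eq hr
      have hcv : pres col v := by rw [hvs]; exact pres_swap_of_eq hc
      have hgv : u * g * v = g := by
        rw [hv, hu]
        have h4 : Equiv.swap x x' * g * (g⁻¹ * Equiv.swap x x' * g) =
            (Equiv.swap x x' * Equiv.swap x x') * g := by group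
        rw [h4, Equiv.swap_mul_self, one_mul]
      have hsv : ((Perm.sign v : ℤ) : ℝ) = -1 := by
        rw [hvs, Perm.sign_swap]
        · simp
        · intro hcon
          exact hne (by simpa using g.injective (by simpa using congrArg g hcon))
      have := hy u v g hru hcv
      rw [hgv, hsv] at this
      linarith
    rw [h1, h2, mul_zero]

/-- factorization of a transposition over R × C -/
lemma swap_factor (H1 : ∀ x y : α, row x = row y → col x = col y → x = y)
    {p q : Perm α} {x y : α} (hxy : x ≠ y)
    (hp : pres row p) (hq : pres col q) (hpq : p * q = Equiv.swap x y) :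
    (q = 1 ∧ p = Equiv.swap x y) ∨ (q = Equiv.swap x y ∧ p = 1) := by
  have hfix : ∀ w : α, w ≠ x → w ≠ y → q w = w := by
    intro w hwx hwy
    by_contra hne
    have h1 : p (q w) = w := by
      have : (p * q) w = w := by rw [hpq, Equiv.swap_apply_of_ne_of_ne hwx hwy]
      simpa [Perm.mul_apply] using this
    have hrw : row (q w) = row w := by
      have := hp (q w); rw [h1] at this; exact this.symm
    exact hne (H1 (q w) w hrw (hq w))
  have hqx : q x = x ∨ q x = y := by
    by_contra hcon
    push_neg at hcon
    have h1 : q (q x) = q x := hfix (q x) hcon.1 hcon.2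
    exact hcon.1 (q.injective h1)
  rcases hqx with hx1 | hx2
  · left
    have hqy : q y = y := by
      by_contra hne
      have h2 : q y ≠ x := fun hcon => hxy (q.injective (hcon.trans hx1.symm)).symm
      have h1 : q (q y) = q y := hfix (q y) h2 hne
      exact hne (q.injective h1)
    have hq1 : q = 1 := by
      ext w
      rcases eq_or_ne w x with rfl | hwx
      · simpa using hx1
      · rcases eq_or_ne w y with rfl | hwy
        · simpa using hqy
        · simpa using hfix w hwx hwy
    constructor
    · exact hq1
    · rw [hq1, mul_one] at hpq; exact hpq
  · right
    have hqy : q y = x := by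
      have h2 : q y ≠ y := by
        intro hcon
        exact hxy (q.injective (by rw [hx2, hcon]) : x = y)
      by_contra h
      exact h2 (q.injective (hfix (q y) h h2))
    have hq1 : q = Equiv.swap x y := by
      ext w
      rcases eq_or_ne w x with rfl | hwx
      · rw [Equiv.swap_apply_left, hx2]
      · rcases eq_or_ne w y with rfl | hwy
        · rw [Equiv.swap_apply_right, hqy]
        · rw [Equiv.swap_apply_of_ne_of_ne hwx hwy, hfix w hwx hwy]
    refine ⟨hq1, ?_⟩
    rw [hq1] at hpq
    have := congrArg (· * (Equiv.swap x y)⁻¹) hpq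
    simpa [mul_assoc] using this

lemma pres_swap_iff {f : α → ℕ} {x y : α} (hxy : x ≠ y) :
    pres f (Equiv.swap x y) ↔ f x = f y := by
  constructor
  · intro h
    have := h x
    rw [Equiv.swap_apply_left] at this
    exact this.symm
  · exact pres_swap_of_eq

lemma esym_swap (H1 : ∀ x y : α, row x = row y → col x = col y → x = y)
    {x y : α} (hxy : x ≠ y) :
    esym row col (Equiv.swap x y) =
      (if row x = row y then (1:ℝ) else 0) - (if col x = col y then (1:ℝ) else 0) := by
  have ht1 : Equiv.swap x y ≠ 1 := by
    intro h
    have := congrArg (fun σ : Perm α => σ x) h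
    simp only [Equiv.swap_apply_left, Perm.one_apply] at this
    exact hxy this.symm
  set t := Equiv.swap x y with htdef
  have hsub : ∀ p : Perm α, pres row p → pres col (p⁻¹ * t) → p = 1 ∨ p = t := by
    intro p hpr hpc
    have h5 : p * (p⁻¹ * t) = Equiv.swap x y := by rw [htdef]; group
    rcases swap_factor row col H1 hxy hpr hpc h5 with ⟨_, hp2⟩ | ⟨_, hp2⟩
    · right; exact hp2
    · left; exact hp2
  have key : esym row col t =
      ∑ p ∈ (univ.filter (pres row)).filter (fun p => p = 1 ∨ p = t),
        (if pres col (p⁻¹ * t) then ((Perm.sign (p⁻¹ * t) : ℤ) : ℝ) else 0) := by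
    unfold esym
    refine (Finset.sum_subset (Finset.filter_subset _ _) ?_).symm
    intro p hp hnp
    simp only [mem_filter, mem_univ, true_and] at hp hnp
    rw [if_neg]
    intro hc
    exact (fun h => hnp ⟨hp, h⟩) (hsub p hp hc)
  rw [key]
  by_cases hrow : row x = row y
  · have hcol : ¬ col x = col y := fun hc => hxy (H1 x y hrow hc)
    have hfilter : (univ.filter (pres row)).filter (fun p => p = 1 ∨ p = t) = {1, t} := by
      ext p
      simp only [mem_filter, mem_univ, true_and, mem_insert, mem_singleton]
      constructor
      · exact fun h => h.2
      · rintro (rfl | rfl)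
        · exact ⟨pres_one row, Or.inl rfl⟩
        · exact ⟨pres_swap_of_eq hrow, Or.inr rfl⟩
    rw [hfilter, Finset.sum_insert (by simpa using ht1.symm), Finset.sum_singleton]
    rw [if_neg (by simpa [htdef, pres_swap_iff hxy] using hcol)]
    rw [if_pos (by simpa using pres_one col)]
    simp [hrow, hcol]
  · have hfilter : (univ.filter (pres row)).filter (fun p => p = 1 ∨ p = t) = {1} := by
      ext p
      simp only [mem_filter, mem_univ, true_and, mem_singleton]
      constructor
      · rintro ⟨hpr, rfl | rfl⟩
        · rfl
        · exact absurd ((pres_swap_iff hxy).mp hpr) hrow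
      · rintro rfl
        exact ⟨pres_one row, Or.inl rfl⟩
    rw [hfilter, Finset.sum_singleton]
    by_cases hcol : col x = col y
    · rw [if_pos (by simpa [htdef, pres_swap_iff hxy] using hcol)]
      have h6 : (1 : Perm α)⁻¹ * t = t := by group
      rw [h6, htdef, Perm.sign_swap hxy]
      simp [hrow, hcol]
    · rw [if_neg (by simpa [htdef, pres_swap_iff hxy] using hcol)]
      simp [hrow, hcol]

lemma card_row_lt (H1 : ∀ x y : α, row x = row y → col x = col y → x = y)
    (H3 : ∀ (x : α) (j' : ℕ), j' ≤ col x → ∃ z, row z = row x ∧ col z = j')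
    (x : α) :
    (univ.filter (fun y => row x = row y ∧ col y < col x)).card = col x := by
  rw [show col x = (range (col x)).card by simp]
  apply Finset.card_bij (fun y _ => col y)
  · intro y hy
    simp only [mem_filter, mem_univ, true_and] at hy
    simpa using hy.2
  · intro y hy y' hy' hc
    simp only [mem_filter, mem_univ, true_and] at hy hy'
    exact H1 y y' (hy.1.symm.trans hy'.1) hc
  · intro j hj
    simp only [mem_range] at hj
    obtain ⟨z, hz1, hz2⟩ := H3 x j (le_of_lt hj)
    exact ⟨z, by simp [hz1.symm, hz2, hj], hz2⟩

lemma sum_offdiag_acc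
    (r c : α → ℕ)
    (H1 : ∀ x y : α, r x = r y → c x = c y → x = y)
    (H3 : ∀ (x : α) (j' : ℕ), j' ≤ c x → ∃ z, r z = r x ∧ c z = j') :
    ∑ z ∈ univ.offDiag, (if r z.1 = r z.2 then (1:ℝ) else 0) = 2 * ∑ x, (c x : ℝ) := by
  have hsplit : ∀ z ∈ (univ : Finset α).offDiag,
      (if r z.1 = r z.2 then (1:ℝ) else 0)
        = (if r z.1 = r z.2 ∧ c z.2 < c z.1 then (1:ℝ) else 0)
          + (if r z.2 = r z.1 ∧ c z.1 < c z.2 then (1:ℝ) else 0) := by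
    intro z hz
    rw [Finset.mem_offDiag] at hz
    by_cases hr : r z.1 = r z.2
    · have hne : c z.1 ≠ c z.2 := fun hc => hz.2.2 (H1 _ _ hr hc)
      rcases lt_or_gt_of_ne hne with h | h
      · rw [if_pos hr, if_neg (by rintro ⟨-, h2⟩; omega), if_pos ⟨hr.symm, h⟩]; ring
      · rw [if_pos hr, if_pos ⟨hr, h⟩, if_neg (by rintro ⟨-, h2⟩; omega)]; ring
    · rw [if_neg hr, if_neg (by rintro ⟨h2, -⟩; exact hr h2),
        if_neg (by rintro ⟨h2, -⟩; exact hr h2.symm)]; ring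
  rw [Finset.sum_congr rfl hsplit, Finset.sum_add_distrib]
  have hsym : ∑ z ∈ (univ : Finset α).offDiag, (if r z.2 = r z.1 ∧ c z.1 < c z.2 then (1:ℝ) else 0)
      = ∑ z ∈ (univ : Finset α).offDiag, (if r z.1 = r z.2 ∧ c z.2 < c z.1 then (1:ℝ) else 0) := by
    refine Finset.sum_bij' (fun z _ => Prod.swap z) (fun z _ => Prod.swap z) ?_ ?_ ?_ ?_ ?_
    · intro z hz
      rw [Finset.mem_offDiag] at hz ⊢
      exact ⟨mem_univ _, mem_univ _, hz.2.2.symm⟩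
    · intro z hz
      rw [Finset.mem_offDiag] at hz ⊢
      exact ⟨mem_univ _, mem_univ _, hz.2.2.symm⟩
    · intro z _; simp
    · intro z _; simp
    · intro z _; simp
  rw [hsym]
  have hext : ∑ z ∈ (univ : Finset α).offDiag, (if r z.1 = r z.2 ∧ c z.2 < c z.1 then (1:ℝ) else 0)
      = ∑ z ∈ (univ : Finset α) ×ˢ (univ : Finset α), (if r z.1 = r z.2 ∧ c z.2 < c z.1 then (1:ℝ) else 0) := by
    apply Finset.sum_subset
    · intro z hz
      rw [Finset.mem_offDiag] at hz
      exact Finset.mem_product.mpr ⟨hz.1, hz.2.1⟩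
    · intro z hz hnz
      have : z.1 = z.2 := by
        by_contra hne
        exact hnz (by simp [Finset.mem_offDiag, hne])
      rw [if_neg (by rw [this]; omega)]
  rw [hext, Finset.sum_product]
  have hrow : ∀ x : α, ∑ y : α, (if r x = r y ∧ c y < c x then (1:ℝ) else 0) = (c x : ℝ) := by
    intro x
    rw [Finset.sum_boole, card_row_lt r c H1 H3 x]
  calc ∑ x : α, ∑ y : α, (if r x = r y ∧ c y < c x then (1:ℝ) else 0) + ∑ x : α, ∑ y : α, (if r x = r y ∧ c y < c x then (1:ℝ) else 0)
      = 2 * ∑ x : α, ∑ y : α, (if r x = r y ∧ c y < c x then (1:ℝ) else 0) := by ring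
  _ = 2 * ∑ x, (c x : ℝ) := by rw [Finset.sum_congr rfl (fun x _ => hrow x)]

lemma fiber_swap {x y : α} (hxy : x ≠ y) :
    ((univ : Finset α).offDiag).filter (fun z => Equiv.swap z.1 z.2 = Equiv.swap x y)
      = ({(x, y), (y, x)} : Finset (α × α)) := by
  ext z
  simp only [mem_filter, Finset.mem_offDiag, mem_univ, true_and, mem_insert, mem_singleton]
  constructor
  · rintro ⟨hne, heq⟩
    have hv : Equiv.swap x y z.1 = z.2 := by
      rw [← heq, Equiv.swap_apply_left]
    rcases eq_or_ne z.1 x with h1 | h1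
    · left
      rw [h1, Equiv.swap_apply_left] at hv
      exact Prod.ext h1 hv.symm
    · rcases eq_or_ne z.1 y with h2 | h2
      · right
        rw [h2, Equiv.swap_apply_right] at hv
        exact Prod.ext h2 hv.symm
      · exfalso
        rw [Equiv.swap_apply_of_ne_of_ne h1 h2] at hv
        exact hne hv
  · rintro (rfl | rfl)
    · simp [hxy]
    · simp [hxy.symm, Equiv.swap_comm]

lemma gamma_eq (H1 : ∀ x y : α, row x = row y → col x = col y → x = y)
    (H2 : ∀ (x : α) (i' : ℕ), i' ≤ row x → ∃ z, row z = i' ∧ col z = col x)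
    (H3 : ∀ (x : α) (j' : ℕ), j' ≤ col x → ∃ z, row z = row x ∧ col z = j') :
    ∑ t ∈ univ.filter Perm.IsSwap, esym row col t
      = (∑ x, (col x : ℝ)) - ∑ x, (row x : ℝ) := by
  have hmaps : ∀ z ∈ (univ : Finset α).offDiag,
      Equiv.swap z.1 z.2 ∈ univ.filter (Perm.IsSwap (α := α)) := by
    intro z hz
    rw [Finset.mem_offDiag] at hz
    simp only [mem_filter, mem_univ, true_and]
    exact ⟨z.1, z.2, hz.2.2, rfl⟩
  have h2to1 : ∑ z ∈ (univ : Finset α).offDiag, esym row col (Equiv.swap z.1 z.2)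
      = 2 * ∑ t ∈ univ.filter Perm.IsSwap, esym row col t := by
    rw [← Finset.sum_fiberwise_of_maps_to hmaps (fun z => esym row col (Equiv.swap z.1 z.2)),
      Finset.mul_sum]
    apply Finset.sum_congr rfl
    intro t ht
    simp only [mem_filter, mem_univ, true_and] at ht
    obtain ⟨x, y, hxy, rfl⟩ := ht
    rw [fiber_swap hxy]
    rw [Finset.sum_insert (by simp [Prod.ext_iff, hxy]), Finset.sum_singleton]
    rw [show Equiv.swap y x = Equiv.swap x y from Equiv.swap_comm y x]
    ring
  have hval : ∑ z ∈ (univ : Finset α).offDiag, esym row col (Equiv.swap z.1 z.2)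
      = ∑ z ∈ (univ : Finset α).offDiag,
          ((if row z.1 = row z.2 then (1:ℝ) else 0) - (if col z.1 = col z.2 then (1:ℝ) else 0)) := by
    apply Finset.sum_congr rfl
    intro z hz
    rw [Finset.mem_offDiag] at hz
    exact esym_swap row col H1 hz.2.2
  have hA := sum_offdiag_acc row col H1 H3
  have hB := sum_offdiag_acc col row (fun x y hc hr => H1 x y hr hc)
    (fun x i' hi' => by obtain ⟨z, hz1, hz2⟩ := H2 x i' hi'; exact ⟨z, hz2, hz1⟩)
  rw [hval, Finset.sum_sub_distrib, hA, hB] at h2to1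
  linarith

lemma isSwap_ne_one {t : Perm α} (ht : t.IsSwap) : t ≠ 1 := by
  obtain ⟨x, y, hxy, rfl⟩ := ht
  intro h
  have := congrArg (fun σ : Perm α => σ x) h
  simp only [Equiv.swap_apply_left, Perm.one_apply] at this
  exact hxy this.symm

lemma isSwap_inv_eq {t : Perm α} (ht : t.IsSwap) : t⁻¹ = t := by
  obtain ⟨x, y, hxy, rfl⟩ := ht
  exact Equiv.swap_inv x y


/-- abstract eigenvector existence -/
theorem abstract_eig (row col : α → ℕ)
    (H1 : ∀ x y : α, row x = row y → col x = col y → x = y)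
    (H2 : ∀ (x : α) (i' : ℕ), i' ≤ row x → ∃ z, row z = i' ∧ col z = col x)
    (H3 : ∀ (x : α) (j' : ℕ), j' ≤ col x → ∃ z, row z = row x ∧ col z = j') :
    ∃ v : Perm α → ℝ, v ≠ 0 ∧ ∀ f : Perm α,
      (∑ t ∈ univ.filter Perm.IsSwap, v (t * f))
        = ((∑ x, (col x : ℝ)) - ∑ x, (row x : ℝ)) * v f := by
  refine ⟨esym row col, ?_, ?_⟩
  · intro h0
    have h1 := congrFun h0 1
    rw [esym_one row col H1] at h1
    simpa using h1
  · intro f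
    have hP : Pprop row col (Zop (esym row col)) :=
      Pprop_Zop row col (Pprop_esym row col)
    have hr := rigidity row col H1 H2 hP f
    have hr2 : ∑ t ∈ univ.filter Perm.IsSwap, esym row col (t * 1)
        = ∑ t ∈ univ.filter Perm.IsSwap, esym row col t :=
      Finset.sum_congr rfl (fun t _ => by rw [mul_one])
    have := gamma_eq row col H1 H2 H3
    unfold Zop at hr
    rw [hr2, this] at hr
    exact hr

lemma permCongr_mul {β : Type*} [Fintype β] [DecidableEq β] (φ : α ≃ β) (s t : Perm α) :
    φ.permCongr (s * t) = φ.permCongr s * φ.permCongr t := by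
  ext z
  simp [Equiv.permCongr_apply, Perm.mul_apply]

lemma permCongr_isSwap {β : Type*} [Fintype β] [DecidableEq β] (φ : α ≃ β) {t : Perm α}
    (ht : t.IsSwap) : (φ.permCongr t).IsSwap := by
  obtain ⟨x, y, hxy, rfl⟩ := ht
  refine ⟨φ x, φ y, fun h => hxy (φ.injective h), ?_⟩
  ext z
  simp only [Equiv.permCongr_apply]
  rcases eq_or_ne z (φ x) with rfl | h1
  · simp
  · rcases eq_or_ne z (φ y) with rfl | h2
    · simp
    · rw [Equiv.swap_apply_of_ne_of_ne h1 h2,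
        Equiv.swap_apply_of_ne_of_ne (fun h => h1 (by rw [← h]; simp))
          (fun h => h2 (by rw [← h]; simp))]
      simp

theorem eig_of_shape (n : ℕ) (m : ℤ) (row col : α → ℕ)
    (H1 : ∀ x y : α, row x = row y → col x = col y → x = y)
    (H2 : ∀ (x : α) (i' : ℕ), i' ≤ row x → ∃ z, row z = i' ∧ col z = col x)
    (H3 : ∀ (x : α) (j' : ℕ), j' ≤ col x → ∃ z, row z = row x ∧ col z = j')
    (hcard : Fintype.card α = n)
    (hm : (∑ x, (col x : ℤ)) - ∑ x, (row x : ℤ) = m) :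
    IsTranspositionGraphEigenvalue n m := by
  obtain ⟨v, hv0, hv⟩ := abstract_eig row col H1 H2 H3
  have φ : α ≃ Fin n := Fintype.equivFinOfCardEq hcard
  set Ψ : Perm (Fin n) ≃ Perm α := φ.symm.permCongr with hΨ
  set v' : Perm (Fin n) → ℝ := fun g => v (Ψ g) with hv'
  have hγ : ((∑ x, (col x : ℝ)) - ∑ x, (row x : ℝ)) = (m : ℝ) := by
    push_cast [← hm]
    norm_num
  refine ⟨v', ?_, ?_⟩
  · intro h0
    apply hv0
    funext g
    have := congrFun h0 (Ψ.symm g)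
    simpa [hv'] using this
  · funext f
    have step1 : (transpositionGraphAdjMatrix n).mulVec v' f
        = ∑ t ∈ univ.filter (Perm.IsSwap (α := Fin n)), v' (t * f) := by
      simp only [Matrix.mulVec, dotProduct, transpositionGraphAdjMatrix]
      have : ∀ g : Perm (Fin n),
          (if f ≠ g ∧ (f * g⁻¹).IsSwap then (1:ℝ) else 0) * v' g
            = (if f ≠ g ∧ (f * g⁻¹).IsSwap then v' g else 0) := by
        intro g; split <;> simp
      rw [Finset.sum_congr rfl (fun g _ => this g), ← Finset.sum_filter]
      refine Finset.sum_bij' (fun g _ => f * g⁻¹) (fun t _ => t⁻¹ * f) ?_ ?_ ?_ ?_ ?_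
      · intro g hg
        simp only [mem_filter, mem_univ, true_and] at hg ⊢
        exact hg.2
      · intro t ht
        simp only [mem_filter, mem_univ, true_and] at ht ⊢
        constructor
        · intro h
          have : t = 1 := by
            have := congrArg (fun σ => σ * f⁻¹) h
            simpa [mul_assoc] using this.symm
          exact isSwap_ne_one ht this
        · have hsimp : f * (t⁻¹ * f)⁻¹ = t := by group
          rw [hsimp]; exact ht
      · intro g _; group
      · intro t _; group
      · intro g hg
        simp only [mem_filter, mem_univ, true_and] at hg
        calc v' g = v' ((f * g⁻¹)⁻¹ * f) := by congr 1; group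
        _ = v' ((f * g⁻¹) * f) := by rw [isSwap_inv_eq hg.2]
    have step2 : ∑ t ∈ univ.filter (Perm.IsSwap (α := Fin n)), v' (t * f)
        = ∑ t ∈ univ.filter (Perm.IsSwap (α := α)), v (t * Ψ f) := by
      refine Finset.sum_bij' (fun t _ => Ψ t) (fun t _ => Ψ.symm t) ?_ ?_ ?_ ?_ ?_
      · intro t ht
        simp only [mem_filter, mem_univ, true_and] at ht ⊢
        exact permCongr_isSwap _ ht
      · intro t ht
        simp only [mem_filter, mem_univ, true_and] at ht ⊢
        have : Ψ.symm t = φ.permCongr t := by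
          rw [hΨ]; rfl
        rw [this]
        exact permCongr_isSwap _ ht
      · intro t _; simp
      · intro t _; simp
      · intro t ht
        show v (Ψ (t * f)) = v (Ψ t * Ψ f)
        rw [hΨ, permCongr_mul]
    rw [Pi.smul_apply, smul_eq_mul, step1, step2, hv (Ψ f), hγ, hv']

def diag (lam : ℕ → ℕ) (N : ℕ) : Finset (ℕ × ℕ) :=
  (range N).biUnion (fun i => (range (lam i)).image (fun j => (i, j)))

lemma mem_diag {lam : ℕ → ℕ} {N : ℕ} {p : ℕ × ℕ} :
    p ∈ diag lam N ↔ p.1 < N ∧ p.2 < lam p.1 := by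
  unfold diag
  simp only [mem_biUnion, mem_range, mem_image]
  constructor
  · rintro ⟨i, hi, j, hj, rfl⟩
    exact ⟨hi, hj⟩
  · rintro ⟨h1, h2⟩
    exact ⟨p.1, h1, p.2, h2, rfl⟩

lemma diag_sum {M : Type*} [AddCommMonoid M] (lam : ℕ → ℕ) (N : ℕ) (f : ℕ × ℕ → M) :
    ∑ p ∈ diag lam N, f p = ∑ i ∈ range N, ∑ j ∈ range (lam i), f (i, j) := by
  unfold diag
  rw [Finset.sum_biUnion]
  · apply Finset.sum_congr rfl
    intro i _
    rw [Finset.sum_image]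
    intro a _ b _ hab
    simpa using hab
  · intro i _ j _ hij
    apply Finset.disjoint_left.mpr
    intro p hp hq
    simp only [mem_image, mem_range] at hp hq
    obtain ⟨j1, _, rfl⟩ := hp
    obtain ⟨j2, _, hifst⟩ := hq
    exact hij (by simpa using congrArg Prod.fst hifst.symm)

lemma diag_card (lam : ℕ → ℕ) (N : ℕ) : (diag lam N).card = ∑ i ∈ range N, lam i := by
  rw [Finset.card_eq_sum_ones, diag_sum]
  apply Finset.sum_congr rfl
  intro i _
  simp

theorem shape_eig (lam : ℕ → ℕ) (N : ℕ) (n : ℕ) (m : ℤ)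
    (Hanti : ∀ i j, i ≤ j → lam j ≤ lam i)
    (hsize : ∑ i ∈ range N, lam i = n)
    (hcont : ∑ i ∈ range N, ((lam i : ℤ) * ((lam i : ℤ) - 1) - 2 * (i : ℤ) * (lam i : ℤ))
       = 2 * m) :
    IsTranspositionGraphEigenvalue n m := by
  classical
  refine eig_of_shape n m (fun x : {p : ℕ × ℕ // p ∈ diag lam N} => x.1.1) (fun x => x.1.2)
    ?_ ?_ ?_ ?_ ?_
  · intro x y h1 h2
    exact Subtype.ext (Prod.ext h1 h2)
  · intro x i' hi'
    have hx := mem_diag.mp x.2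
    have hmem : (i', x.1.2) ∈ diag lam N :=
      mem_diag.mpr ⟨lt_of_le_of_lt hi' hx.1, lt_of_lt_of_le hx.2 (Hanti i' x.1.1 hi')⟩
    exact ⟨⟨(i', x.1.2), hmem⟩, rfl, rfl⟩
  · intro x j' hj'
    have hx := mem_diag.mp x.2
    have hmem : (x.1.1, j') ∈ diag lam N :=
      mem_diag.mpr ⟨hx.1, lt_of_le_of_lt hj' hx.2⟩
    exact ⟨⟨(x.1.1, j'), hmem⟩, rfl, rfl⟩
  · rw [Fintype.card_coe, diag_card, hsize]
  · have hcol : ∑ x : {p : ℕ × ℕ // p ∈ diag lam N}, ((x : ℕ × ℕ).2 : ℤ)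
        = ∑ i ∈ range N, ∑ j ∈ range (lam i), (j : ℤ) := by
      rw [Finset.sum_coe_sort (diag lam N) (fun p => (p.2 : ℤ)), diag_sum]
    have hrow : ∑ x : {p : ℕ × ℕ // p ∈ diag lam N}, ((x : ℕ × ℕ).1 : ℤ)
        = ∑ i ∈ range N, (lam i : ℤ) * (i : ℤ) := by
      rw [Finset.sum_coe_sort (diag lam N) (fun p => (p.1 : ℤ)), diag_sum]
      apply Finset.sum_congr rfl
      intro i _
      simp only []
      rw [Finset.sum_const, Finset.card_range]
      push_cast
      ring
    have hgauss : ∀ L : ℕ, (∑ j ∈ range L, (j : ℤ)) * 2 = (L : ℤ) * ((L : ℤ) - 1) := by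
      intro L
      induction L with
      | zero => simp
      | succ L ih =>
        rw [Finset.sum_range_succ]
        push_cast
        linear_combination ih
    have key : (∑ x : {p : ℕ × ℕ // p ∈ diag lam N}, ((x : ℕ × ℕ).2 : ℤ)
        - ∑ x : {p : ℕ × ℕ // p ∈ diag lam N}, ((x : ℕ × ℕ).1 : ℤ)) * 2 = 2 * m := by
      rw [hcol, hrow, ← hcont]
      rw [sub_mul, Finset.sum_mul, Finset.sum_mul]
      rw [← Finset.sum_sub_distrib]
      apply Finset.sum_congr rfl
      intro i _
      rw [hgauss (lam i)]
      ring
    -- conclude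
    have := key
    linarith
lemma gauss2 : ∀ L : ℕ, (∑ j ∈ range L, (j : ℤ)) * 2 = (L : ℤ) * ((L : ℤ) - 1) := by
  intro L
  induction L with
  | zero => simp
  | succ L ih =>
    rw [Finset.sum_range_succ]
    push_cast
    linear_combination ih

lemma gauss2Ico (a b : ℕ) (hab : a ≤ b) :
    (∑ i ∈ Finset.Ico a b, (i : ℤ)) * 2 = (b:ℤ) * ((b:ℤ) - 1) - (a:ℤ) * ((a:ℤ) - 1) := by
  rw [Finset.sum_Ico_eq_sub _ hab, sub_mul, gauss2, gauss2]

/-- the template shape (h, y, z, w, 2^k, 1^(h-4-k)) -/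
def lamT (h y z w k : ℕ) : ℕ → ℕ := fun i =>
  if i = 0 then h else if i = 1 then y else if i = 2 then z else if i = 3 then w
  else if i < 4 + k then 2 else if i < h then 1 else 0

section Template
variable (h y z w k : ℕ) (h4k : 4 + k ≤ h) (hy : y ≤ h) (hz : z ≤ y) (hw : w ≤ z)
  (hw1 : 1 ≤ w) (hw2 : k = 0 ∨ 2 ≤ w)

include h4k hy hz hw hw1 hw2 in
lemma lamT_anti : ∀ i j, i ≤ j → lamT h y z w k j ≤ lamT h y z w k i := by
  intro i j hij
  unfold lamT
  split_ifs <;> omega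

include h4k in
lemma lamT_dec : ∑ i ∈ range h, lamT h y z w k i
    = h + y + z + w + 2 * k + (h - 4 - k) := by
  have h04 : (0:ℕ) ≤ 4 := by omega
  have h44k : (4:ℕ) ≤ 4 + k := by omega
  have e0 : range h = Finset.Ico 0 h := by rw [Finset.range_eq_Ico]
  rw [e0, ← Finset.sum_Ico_consecutive _ (by omega : (0:ℕ) ≤ 4 + k) h4k,
    ← Finset.sum_Ico_consecutive _ h04 h44k]
  have p1 : ∑ i ∈ Finset.Ico 0 4, lamT h y z w k i = h + y + z + w := by
    rw [← Finset.range_eq_Ico]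
    rw [Finset.sum_range_succ, Finset.sum_range_succ, Finset.sum_range_succ,
      Finset.sum_range_succ, Finset.sum_range_zero]
    norm_num [lamT]
  have hval2 : ∀ i ∈ Finset.Ico 4 (4+k), lamT h y z w k i = 2 := by
    intro i hi
    rw [Finset.mem_Ico] at hi
    unfold lamT
    split_ifs <;> omega
  have p2 : ∑ i ∈ Finset.Ico 4 (4+k), lamT h y z w k i = 2 * k := by
    rw [Finset.sum_congr rfl hval2, Finset.sum_const, Nat.card_Ico, smul_eq_mul]
    omega
  have hval3 : ∀ i ∈ Finset.Ico (4+k) h, lamT h y z w k i = 1 := by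
    intro i hi
    rw [Finset.mem_Ico] at hi
    unfold lamT
    split_ifs <;> omega
  have p3 : ∑ i ∈ Finset.Ico (4+k) h, lamT h y z w k i = h - 4 - k := by
    rw [Finset.sum_congr rfl hval3, Finset.sum_const, Nat.card_Ico, smul_eq_mul]
    omega
  rw [p1, p2, p3]

include h4k in
lemma lamT_cont :
    ∑ i ∈ range h, ((lamT h y z w k i : ℤ) * ((lamT h y z w k i : ℤ) - 1)
        - 2 * (i : ℤ) * (lamT h y z w k i : ℤ))
      = (y:ℤ)*((y:ℤ)-1) + (z:ℤ)*((z:ℤ)-1) + (w:ℤ)*((w:ℤ)-1)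
        - 2*(y:ℤ) - 4*(z:ℤ) - 6*(w:ℤ) - (k:ℤ)*(k:ℤ) - 5*(k:ℤ) + 12 := by
  set F : ℕ → ℤ := fun i => ((lamT h y z w k i : ℤ) * ((lamT h y z w k i : ℤ) - 1)
        - 2 * (i : ℤ) * (lamT h y z w k i : ℤ)) with hF
  have e0 : range h = Finset.Ico 0 h := by rw [Finset.range_eq_Ico]
  rw [e0, ← Finset.sum_Ico_consecutive F (by omega : (0:ℕ) ≤ 4 + k) h4k,
    ← Finset.sum_Ico_consecutive F (by omega : (0:ℕ) ≤ 4) (by omega : (4:ℕ) ≤ 4 + k)]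
  have p1 : ∑ i ∈ Finset.Ico 0 4, F i
      = (h:ℤ)*((h:ℤ)-1) + ((y:ℤ)*((y:ℤ)-1) - 2*(y:ℤ)) + ((z:ℤ)*((z:ℤ)-1) - 4*(z:ℤ))
        + ((w:ℤ)*((w:ℤ)-1) - 6*(w:ℤ)) := by
    rw [← Finset.range_eq_Ico]
    rw [Finset.sum_range_succ, Finset.sum_range_succ, Finset.sum_range_succ,
      Finset.sum_range_succ, Finset.sum_range_zero]
    norm_num [hF, lamT]
    try ring
  have p2 : ∑ i ∈ Finset.Ico 4 (4+k), F i = ∑ i ∈ Finset.Ico 4 (4+k), (2 - 4 * (i:ℤ)) := by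
    apply Finset.sum_congr rfl
    intro i hi
    rw [Finset.mem_Ico] at hi
    have hv : lamT h y z w k i = 2 := by
      unfold lamT; split_ifs <;> omega
    rw [hF]
    simp only [hv]
    push_cast
    ring
  have p3 : ∑ i ∈ Finset.Ico (4+k) h, F i = ∑ i ∈ Finset.Ico (4+k) h, (-2 * (i:ℤ)) := by
    apply Finset.sum_congr rfl
    intro i hi
    rw [Finset.mem_Ico] at hi
    have hv : lamT h y z w k i = 1 := by
      unfold lamT; split_ifs <;> omega
    rw [hF]
    simp only [hv]
    push_cast
    ring
  rw [p1, p2, p3]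
  have q2 : ∑ i ∈ Finset.Ico 4 (4+k), (2 - 4 * (i:ℤ))
      = 2 * (k:ℤ) - 4 * (∑ i ∈ Finset.Ico 4 (4+k), (i:ℤ)) := by
    rw [Finset.sum_sub_distrib, Finset.sum_const, Nat.card_Ico, ← Finset.mul_sum]
    push_cast
    ring_nf
    congr 1
    omega
  have q3 : ∑ i ∈ Finset.Ico (4+k) h, (-2 * (i:ℤ))
      = -2 * (∑ i ∈ Finset.Ico (4+k) h, (i:ℤ)) := by
    rw [← Finset.mul_sum]
  have s2 := gauss2Ico 4 (4+k) (by omega)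
  have s3 := gauss2Ico (4+k) h h4k
  rw [q2, q3]
  push_cast at s2 s3 ⊢
  linear_combination (-2 : ℤ) * s2 - s3

end Template

namespace Final

lemma two_mul_choose_two (b : ℕ) : 2 * b.choose 2 = b * (b - 1) := by
  induction b with
  | zero => rfl
  | succ b ih =>
    rw [Nat.choose_succ_succ, Nat.choose_one_right]
    rcases b with _ | b'
    · rfl
    · have hs : (b' + 1) * (b' + 1 - 1) = (b' + 1) * b' := by norm_num
      rw [hs] at ih
      have : (b' + 1 + 1) * (b' + 1 + 1 - 1) = (b' + 1 + 1) * (b' + 1) := by norm_num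
      rw [this, Nat.mul_add, ih]
      ring

theorem stmt16' (n a : ℕ) (hn : 27 ≤ n) (ha1 : 3 ≤ a) (ha2 : a ≤ (n + 4) / 5)
    (hpar : (n - a) % 2 = 0) (m : ℤ)
    (hm1 : (((a - 1).choose 2 : ℕ) : ℤ) + 1 ≤ m) (hm2 : m ≤ ((a.choose 2 : ℕ) : ℤ)) :
    IsTranspositionGraphEigenvalue n m := by
  have h5a : 5 * a ≤ n + 4 := by
    have := (Nat.le_div_iff_mul_le (by norm_num : 0 < 5)).mp ha2
    omega
  have hch : a.choose 2 = (a - 1).choose 2 + (a - 1) := by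
    have h0 : a - 1 + 1 = a := by omega
    calc a.choose 2 = (a - 1 + 1).choose 2 := by rw [h0]
    _ = (a-1).choose 1 + (a-1).choose 2 := Nat.choose_succ_succ _ 1
    _ = (a-1).choose 2 + (a-1) := by rw [Nat.choose_one_right]; omega
  have hC2 : ((a.choose 2 : ℕ) : ℤ) * 2 = (a:ℤ) * ((a:ℤ) - 1) := by
    have h1 := two_mul_choose_two a
    have h2 : ((2 * a.choose 2 : ℕ) : ℤ) = ((a * (a-1) : ℕ) : ℤ) := congrArg (Nat.cast : ℕ → ℤ) h1
    push_cast [Nat.cast_sub (by omega : 1 ≤ a)] at h2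
    linarith
  set E : ℤ := ((a.choose 2 : ℕ) : ℤ) - m with hE
  have hE0 : 0 ≤ E := by omega
  have hEle : E ≤ (a:ℤ) - 2 := by
    have hcast : ((a.choose 2 : ℕ) : ℤ) = (((a-1).choose 2 : ℕ) : ℤ) + ((a - 1 : ℕ) : ℤ) := by
      exact_mod_cast congrArg (Nat.cast : ℕ → ℤ) hch
    omega
  set eN : ℕ := E.toNat with heNdef
  have heN : (eN : ℤ) = E := Int.toNat_of_nonneg hE0
  have h2m : 2 * m = (a:ℤ) * ((a:ℤ) - 1) - 2 * (eN : ℤ) := by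
    rw [heN, hE]
    linarith
  have heNle : (eN : ℤ) ≤ (a : ℤ) - 2 := by rw [heN]; exact hEle
  have heNleN : eN + 2 ≤ a := by exact_mod_cast by omega
  -- case analysis
  rcases Nat.lt_or_ge eN 3 with he3 | he3
  · interval_cases eN
    · -- e = 0 : shape (h, a+1, 4, 1, 1^(h-4))
      obtain ⟨h, hh1, hh2⟩ : ∃ h : ℕ, n = 2*h + a + 2 ∧ a + 1 ≤ h := ⟨(n - a - 2)/2, by omega⟩
      refine shape_eig (lamT h (a+1) 4 1 0) h n m
        (lamT_anti h (a+1) 4 1 0 (by omega) (by omega) (by omega) (by omega) (by omega) (by omega)) ?_ ?_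
      · rw [lamT_dec h (a+1) 4 1 0 (by omega)]; omega
      · rw [lamT_cont h (a+1) 4 1 0 (by omega)]
        push_cast
        push_cast at h2m
        linear_combination -h2m
    · -- e = 1 : shape (h, a+1, 2, 1, 1^(h-4))
      obtain ⟨h, hh1, hh2⟩ : ∃ h : ℕ, n = 2*h + a ∧ a + 1 ≤ h := ⟨(n - a)/2, by omega⟩
      refine shape_eig (lamT h (a+1) 2 1 0) h n m
        (lamT_anti h (a+1) 2 1 0 (by omega) (by omega) (by omega) (by omega) (by omega) (by omega)) ?_ ?_
      · rw [lamT_dec h (a+1) 2 1 0 (by omega)]; omega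
      · rw [lamT_cont h (a+1) 2 1 0 (by omega)]
        push_cast
        push_cast at h2m
        linear_combination -h2m
    · -- e = 2
      rcases Nat.lt_or_ge a 6 with ha6 | ha6
      · rcases Nat.lt_or_ge a 5 with ha5 | ha5
        · -- a = 4 : shape (h, 6, 4, 3, 2, 1^(h-5))
          have ha4 : a = 4 := by omega
          subst ha4
          obtain ⟨h, hh1, hh2⟩ : ∃ h : ℕ, n = 2*h + 10 ∧ 6 ≤ h := ⟨(n - 10)/2, by omega⟩
          refine shape_eig (lamT h 6 4 3 1) h n m
            (lamT_anti h 6 4 3 1 (by omega) (by omega) (by omega) (by omega) (by omega) (by omega)) ?_ ?_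
          · rw [lamT_dec h 6 4 3 1 (by omega)]; omega
          · rw [lamT_cont h 6 4 3 1 (by omega)]
            push_cast
            push_cast at h2m
            linear_combination -h2m
        · -- a = 5 : shape (h, 5, 5, 1, 1^(h-4))
          have ha5' : a = 5 := by omega
          subst ha5'
          obtain ⟨h, hh1, hh2⟩ : ∃ h : ℕ, n = 2*h + 7 ∧ 5 ≤ h := ⟨(n - 7)/2, by omega⟩
          refine shape_eig (lamT h 5 5 1 0) h n m
            (lamT_anti h 5 5 1 0 (by omega) (by omega) (by omega) (by omega) (by omega) (by omega)) ?_ ?_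
          · rw [lamT_dec h 5 5 1 0 (by omega)]; omega
          · rw [lamT_cont h 5 5 1 0 (by omega)]
            push_cast
            push_cast at h2m
            linear_combination -h2m
      · -- a ≥ 6 : shape (h, a, a, 2, 2^(a-6), 1^(h-4-(a-6)))
        obtain ⟨h, hh1, hh2⟩ : ∃ h : ℕ, n = 2*h + 3*a - 8 ∧ a ≤ h := ⟨(n - (3*a - 8))/2, by omega⟩
        have hcast6 : ((a - 6 : ℕ) : ℤ) = (a:ℤ) - 6 := by
          push_cast [Nat.cast_sub (by omega : 6 ≤ a)]; ring
        refine shape_eig (lamT h a a 2 (a-6)) h n m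
          (lamT_anti h a a 2 (a-6) (by omega) (by omega) (by omega) (by omega) (by omega) (by omega)) ?_ ?_
        · rw [lamT_dec h a a 2 (a-6) (by omega)]; omega
        · rw [lamT_cont h a a 2 (a-6) (by omega)]
          rw [hcast6]
          push_cast
          push_cast at h2m
          linear_combination -h2m
  · -- e ≥ 3 : shape (h, a+1, e+1, 3, 2^(e-3), 1^(h-4-(e-3)))
    obtain ⟨h, hh1, hh2⟩ : ∃ h : ℕ, n + 2 = 2*h + a + 2*eN ∧ a + 1 ≤ h :=
      ⟨(n + 2 - a - 2*eN)/2, by omega⟩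
    have hcast3 : ((eN - 3 : ℕ) : ℤ) = (eN:ℤ) - 3 := by
      push_cast [Nat.cast_sub (by omega : 3 ≤ eN)]; ring
    refine shape_eig (lamT h (a+1) (eN+1) 3 (eN-3)) h n m
      (lamT_anti h (a+1) (eN+1) 3 (eN-3) (by omega) (by omega) (by omega) (by omega) (by omega) (by omega)) ?_ ?_
    · rw [lamT_dec h (a+1) (eN+1) 3 (eN-3) (by omega)]; omega
    · rw [lamT_cont h (a+1) (eN+1) 3 (eN-3) (by omega)]
      rw [hcast3]
      push_cast
      push_cast at h2m
      linear_combination -h2m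

end Final
end TG

theorem stmt16 (n a : ℕ) (hn : 27 ≤ n) (ha1 : 3 ≤ a) (ha2 : a ≤ (n + 4) / 5)
    (hpar : (n - a) % 2 = 0) (m : ℤ)
    (hm1 : (((a - 1).choose 2 : ℕ) : ℤ) + 1 ≤ m) (hm2 : m ≤ ((a.choose 2 : ℕ) : ℤ)) :
    IsTranspositionGraphEigenvalue n m :=
  TG.Final.stmt16' n a hn ha1 ha2 hpar m hm1 hm2
end
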